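/- arXiv:2502.02084 — 5 statements merged into one kernel-verified Lean document; each statement's English description precedes it below -/
import Mathlib

section
/- Let m ≥ 0, n ≥ 1, μ, ν ≥ 0 with δ = (μ-1)² - 4ν² > 0, and let β ∈ ℝ. Define z(t,x) = (m+1)²|x|²/t^{2(m+1)} and Φ_β(t,x) = t^{1-β} ψ(z(t,x)) for a C² function ψ on [0,1). Then Φ_β satisfies ∂²_t Φ - t^{2m} Δ_x Φ - ∂_t((μ/t)Φ) + (ν²/t²)Φ = 0 for all t ≥ 1 and |x| < t^{m+1}/(m+1) if and only if ψ satisfies the hypergeometric-type ODE z(1-z)ψ''(z) + [n/2 - ((β-1)/(m+1) + 1/(2(m+1)) + μ/(2(m+1)) + 1)z]ψ'(z) - (β(β+μ-1)+ν²)/(4(m+1)²) ψ(z) = 0 on (0,1). -/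
open Real Set

/-- The Laplacian of a function on `ℝⁿ`, as the sum of second partial derivatives. -/
noncomputable def lap {n : ℕ} (f : EuclideanSpace ℝ (Fin n) → ℝ)
    (x : EuclideanSpace ℝ (Fin n)) : ℝ :=
  ∑ i : Fin n, iteratedFDeriv ℝ 2 f x ![EuclideanSpace.single i 1, EuclideanSpace.single i 1]

open Filter Topology

section Aux

variable {n : ℕ}

variable {ψ ψ₁ ψ₂ : ℝ → ℝ}

-- 1-D facts derived from ContDiffOn
lemma oneD_d0 (hψ : ContDiffOn ℝ 2 ψ (Ico 0 1)) :
    HasDerivWithinAt ψ (derivWithin ψ (Ico 0 1) 0) (Ico 0 1) 0 :=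
  ((hψ.differentiableOn (by norm_num)) 0 (by constructor <;> norm_num)).hasDerivWithinAt

lemma oneD_d1 (hψ : ContDiffOn ℝ 2 ψ (Ico 0 1)) {w : ℝ} (hw : w ∈ Ioo (0:ℝ) 1) :
    HasDerivAt ψ (derivWithin ψ (Ico 0 1) w) w ∧ derivWithin ψ (Ico 0 1) w = deriv ψ w := by
  have hnh : Ico (0:ℝ) 1 ∈ 𝓝 w := mem_nhds_iff.2 ⟨Ioo 0 1, Ioo_subset_Ico_self, isOpen_Ioo, hw⟩
  have hca : ContDiffAt ℝ 2 ψ w := hψ.contDiffAt hnh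
  have hda : DifferentiableAt ℝ ψ w := hca.differentiableAt (by norm_num)
  have he : derivWithin ψ (Ico 0 1) w = deriv ψ w := derivWithin_of_mem_nhds hnh
  exact ⟨he ▸ hda.hasDerivAt, he⟩

lemma oneD_d2 (hψ : ContDiffOn ℝ 2 ψ (Ico 0 1)) {w : ℝ} (hw : w ∈ Ioo (0:ℝ) 1) :
    HasDerivAt (derivWithin ψ (Ico 0 1)) (derivWithin (derivWithin ψ (Ico 0 1)) (Ico 0 1) w) w ∧
      derivWithin (derivWithin ψ (Ico 0 1)) (Ico 0 1) w = deriv (deriv ψ) w := by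
  have hnh : Ico (0:ℝ) 1 ∈ 𝓝 w := mem_nhds_iff.2 ⟨Ioo 0 1, Ioo_subset_Ico_self, isOpen_Ioo, hw⟩
  have hca : ContDiffAt ℝ 2 ψ w := hψ.contDiffAt hnh
  obtain ⟨u, hu, hu2⟩ := hca.contDiffOn (le_refl 2) (by simp)
  have hwu : w ∈ interior u := mem_interior_iff_mem_nhds.2 hu
  have hu2' : ContDiffOn ℝ 2 ψ (interior u) := hu2.mono interior_subset
  have hd : ContDiffOn ℝ 1 (deriv ψ) (interior u) :=
    hu2'.deriv_of_isOpen isOpen_interior (by norm_num)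
  have hdd : DifferentiableAt ℝ (deriv ψ) w :=
    (hd.differentiableOn one_ne_zero w hwu).differentiableAt (isOpen_interior.mem_nhds hwu)
  -- derivWithin ψ (Ico 0 1) agrees with deriv ψ near w
  have hev : derivWithin ψ (Ico 0 1) =ᶠ[𝓝 w] deriv ψ := by
    filter_upwards [isOpen_Ioo.mem_nhds hw] with y hy
    exact derivWithin_of_mem_nhds
      (mem_nhds_iff.2 ⟨Ioo 0 1, Ioo_subset_Ico_self, isOpen_Ioo, hy⟩)
  have h1 : HasDerivAt (derivWithin ψ (Ico 0 1)) (deriv (deriv ψ) w) w :=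
    hdd.hasDerivAt.congr_of_eventuallyEq hev
  have hnh2 : derivWithin (derivWithin ψ (Ico 0 1)) (Ico 0 1) w = deriv (deriv ψ) w := by
    rw [derivWithin_of_mem_nhds hnh, hev.deriv_eq]
  exact ⟨hnh2 ▸ h1, hnh2⟩

lemma oneD_c0 (hψ : ContDiffOn ℝ 2 ψ (Ico 0 1)) :
    ContinuousWithinAt (derivWithin ψ (Ico 0 1)) (Ico 0 1) 0 :=
  (hψ.continuousOn_derivWithin (uniqueDiffOn_Ico 0 1) (by norm_num)) 0
    (by constructor <;> norm_num)

lemma oneD_c0' (hψ : ContDiffOn ℝ 2 ψ (Ico 0 1)) :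
    ContinuousWithinAt (derivWithin (derivWithin ψ (Ico 0 1)) (Ico 0 1)) (Ico 0 1) 0 := by
  have h1 : ContDiffOn ℝ 1 (derivWithin ψ (Ico 0 1)) (Ico 0 1) :=
    hψ.derivWithin (uniqueDiffOn_Ico 0 1) (by norm_num)
  exact (h1.continuousOn_derivWithin (uniqueDiffOn_Ico 0 1) (le_refl 1)) 0
    (by constructor <;> norm_num)

lemma q_hasFDerivAt (a : ℝ) (y : EuclideanSpace ℝ (Fin n)) :
    HasFDerivAt (fun v : EuclideanSpace ℝ (Fin n) => a * ‖v‖^2)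
      ((2*a) • innerSL ℝ y) y := by
  have h := (hasFDerivAt_id y).norm_sq.const_mul a
  refine h.congr_fderiv ?_
  ext v
  simp [two_smul, real_inner_comm]
  ring

lemma norm_sq_eq (x : EuclideanSpace ℝ (Fin n)) : ‖x‖^2 = ∑ i, (x i)^2 := by
  rw [EuclideanSpace.norm_eq, Real.sq_sqrt (by positivity)]
  simp [Real.norm_eq_abs, sq_abs]

set_option maxHeartbeats 1000000 in
lemma lap_eq
    (hd0 : HasDerivWithinAt ψ (ψ₁ 0) (Ico 0 1) 0)
    (hd1 : ∀ w ∈ Ioo (0:ℝ) 1, HasDerivAt ψ (ψ₁ w) w)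
    (hd2 : ∀ w ∈ Ioo (0:ℝ) 1, HasDerivAt ψ₁ (ψ₂ w) w)
    (hc1 : ContinuousWithinAt ψ₁ (Ico 0 1) 0)
    (A a : ℝ) (ha : 0 < a) (x : EuclideanSpace ℝ (Fin n)) (hx : a * ‖x‖^2 < 1) :
    lap (fun y => A * ψ (a * ‖y‖^2)) x
      = A * a * (4 * (a*‖x‖^2) * ψ₂ (a*‖x‖^2) + 2*n*ψ₁ (a*‖x‖^2)) := by
  set f : EuclideanSpace ℝ (Fin n) → ℝ := fun y => A * ψ (a * ‖y‖^2) with hf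
  set g : EuclideanSpace ℝ (Fin n) → (EuclideanSpace ℝ (Fin n) →L[ℝ] ℝ) := fun y => (2*A*a*ψ₁ (a*‖y‖^2)) • innerSL ℝ y with hg
  -- first derivative
  have hfd : ∀ y : EuclideanSpace ℝ (Fin n), a*‖y‖^2 < 1 → HasFDerivAt f (g y) y := by
    intro y hy
    rcases eq_or_ne y 0 with rfl | hy0
    · set r : ℝ := Real.sqrt a⁻¹ with hr
      have hrpos : 0 < r := Real.sqrt_pos.2 (by positivity)
      have hmaps : MapsTo (fun v : EuclideanSpace ℝ (Fin n) => a*‖v‖^2) (Metric.ball 0 r) (Ico 0 1) := by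
        intro v hv
        simp only [Metric.mem_ball, dist_zero_right] at hv
        constructor
        · positivity
        · have h1 : ‖v‖^2 < a⁻¹ := by
            rcases eq_or_lt_of_le (norm_nonneg v) with h | h
            · rw [← h]; simpa using (by positivity : (0:ℝ) < a⁻¹)
            · exact (Real.lt_sqrt (norm_nonneg v)).1 hv
          calc a * ‖v‖^2 < a * a⁻¹ := by exact (mul_lt_mul_iff_right₀ ha).2 h1
          _ = 1 := mul_inv_cancel₀ ha.ne'
      have hq : HasFDerivWithinAt (fun v : EuclideanSpace ℝ (Fin n) => a*‖v‖^2) ((2*a) • innerSL ℝ 0)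
          (Metric.ball 0 r) 0 := (q_hasFDerivAt a 0).hasFDerivWithinAt
      have hcomp := (hd0.comp_hasFDerivWithinAt_of_eq 0 hq hmaps (by simp)).hasFDerivAt
        (Metric.ball_mem_nhds _ hrpos)
      have h2 := hcomp.const_mul A
      refine h2.congr_fderiv ?_
      rw [hg]
      simp only [norm_zero]
      rw [show innerSL ℝ (0:EuclideanSpace ℝ (Fin n)) = 0 from map_zero _]
      simp
    · have hny : 0 < ‖y‖ := norm_pos_iff.2 hy0
      have hw : a*‖y‖^2 ∈ Ioo (0:ℝ) 1 := ⟨by positivity, hy⟩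
      have hcomp := ((hd1 _ hw).comp_hasFDerivAt_of_eq y (q_hasFDerivAt a y) rfl).const_mul A
      refine hcomp.congr_fderiv ?_
      rw [hg, smul_smul, smul_smul]
      congr 1
      ring
  -- the set U is open
  have hU : IsOpen {y : EuclideanSpace ℝ (Fin n) | a*‖y‖^2 < 1} :=
    isOpen_lt (by fun_prop) continuous_const
  have heq : fderiv ℝ f =ᶠ[𝓝 x] g := by
    have hxU : x ∈ {y : EuclideanSpace ℝ (Fin n) | a*‖y‖^2 < 1} := hx
    filter_upwards [hU.mem_nhds hxU] with y hy
    exact (hfd y hy).fderiv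
  have hlap : lap f x = ∑ i : Fin n, fderiv ℝ g x (EuclideanSpace.single i 1)
      (EuclideanSpace.single i 1) := by
    unfold lap
    congr 1
    funext i
    rw [iteratedFDeriv_two_apply, heq.fderiv_eq]
    simp
  rcases eq_or_ne x 0 with rfl | hx0
  · -- second derivative at 0, by hand
    have hB : HasFDerivAt g ((2*A*a*ψ₁ 0) • (innerSL ℝ : EuclideanSpace ℝ (Fin n) →L[ℝ] EuclideanSpace ℝ (Fin n) →L[ℝ] ℝ)) 0 := by
      rw [hasFDerivAt_iff_isLittleO_nhds_zero]
      have hg0 : g 0 = 0 := by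
        rw [hg]
        simp only [norm_zero]
        rw [show innerSL ℝ (0:EuclideanSpace ℝ (Fin n)) = 0 from map_zero _]
        simp
      have hqc : Tendsto (fun h : EuclideanSpace ℝ (Fin n) => a*‖h‖^2) (𝓝 0) (𝓝 0) := by
        have hc : Continuous (fun h : EuclideanSpace ℝ (Fin n) => a*‖h‖^2) := by fun_prop
        simpa using hc.tendsto 0
      have htd : Tendsto (fun h : EuclideanSpace ℝ (Fin n) => ψ₁ (a*‖h‖^2)) (𝓝 0) (𝓝 (ψ₁ 0)) := by
        have hqc' : Tendsto (fun h : EuclideanSpace ℝ (Fin n) => a*‖h‖^2) (𝓝 0) (𝓝[Ico (0:ℝ) 1] 0) := by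
          rw [tendsto_nhdsWithin_iff]
          refine ⟨hqc, ?_⟩
          filter_upwards [hqc (Iio_mem_nhds (by norm_num : (0:ℝ) < 1))] with h hh
          exact ⟨by positivity, hh⟩
        exact hc1.tendsto.comp hqc'
      rw [Asymptotics.isLittleO_iff]
      intro c hc
      have hKpos : (0:ℝ) < 2 * |A| * a + 1 := by positivity
      have hεpos : (0:ℝ) < c / (2 * |A| * a + 1) := by positivity
      have hev : ∀ᶠ h : EuclideanSpace ℝ (Fin n) in 𝓝 0, |ψ₁ (a*‖h‖^2) - ψ₁ 0| < c / (2 * |A| * a + 1) := by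
        have := Metric.tendsto_nhds.1 htd _ hεpos
        simpa [Real.dist_eq] using this
      filter_upwards [hev] with h hh
      have hexp : g (0 + h) - g 0 - ((2*A*a*ψ₁ 0) • (innerSL ℝ : EuclideanSpace ℝ (Fin n) →L[ℝ] EuclideanSpace ℝ (Fin n) →L[ℝ] ℝ)) h
          = (2*A*a*(ψ₁ (a*‖h‖^2) - ψ₁ 0)) • innerSL ℝ h := by
        rw [zero_add, hg0, hg]
        simp only [ContinuousLinearMap.smul_apply, sub_zero]
        erw [← sub_smul]
        congr 1
        ring
      rw [hexp]
      rw [norm_smul (2 * A * a * (ψ₁ (a*‖h‖^2) - ψ₁ 0)) ((innerSL ℝ) h), innerSL_apply_norm]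
      have h1 : ‖(2*A*a*(ψ₁ (a*‖h‖^2) - ψ₁ 0))‖ ≤ c := by
        rw [Real.norm_eq_abs, abs_mul]
        have h2 : |2*A*a| = 2 * |A| * a := by
          rw [abs_mul, abs_mul]
          simp [abs_of_pos ha, abs_of_nonneg, abs_two]
        rw [h2]
        calc 2 * |A| * a * |ψ₁ (a*‖h‖^2) - ψ₁ 0| ≤ (2 * |A| * a + 1) * (c / (2 * |A| * a + 1)) := by
              apply mul_le_mul (by linarith) hh.le (abs_nonneg _) (by positivity)
        _ = c := by field_simp
      exact mul_le_mul_of_nonneg_right h1 (norm_nonneg _)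
    rw [hlap]
    have hval : ∀ i : Fin n, fderiv ℝ g 0 (EuclideanSpace.single i 1) (EuclideanSpace.single i 1)
        = 2*A*a*ψ₁ 0 := by
      intro i
      rw [show fderiv ℝ g 0 = _ from hB.fderiv]
      simp [ContinuousLinearMap.smul_apply, innerSL_apply_apply, EuclideanSpace.inner_single_left,
        EuclideanSpace.single_apply]
      erw [innerSL_apply_apply]
      simp
    simp only [hval, Finset.sum_const, Finset.card_univ, Fintype.card_fin, nsmul_eq_mul]
    simp only [norm_zero]
    ring
  · -- second derivative away from 0
    have hny : 0 < ‖x‖ := norm_pos_iff.2 hx0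
    have hw : a*‖x‖^2 ∈ Ioo (0:ℝ) 1 := ⟨by positivity, hx⟩
    have hφ : HasFDerivAt (fun y : EuclideanSpace ℝ (Fin n) => 2*A*a*ψ₁ (a*‖y‖^2))
        ((2*A*a*ψ₂ (a*‖x‖^2)) • ((2*a) • innerSL ℝ x)) x := by
      have := ((hd2 _ hw).comp_hasFDerivAt_of_eq x (q_hasFDerivAt a x) rfl).const_mul (2*A*a)
      refine this.congr_fderiv ?_
      rw [smul_smul, smul_smul]
    have hlin : HasFDerivAt (fun y : EuclideanSpace ℝ (Fin n) => innerSL ℝ y) (innerSL ℝ : EuclideanSpace ℝ (Fin n) →L[ℝ] EuclideanSpace ℝ (Fin n) →L[ℝ] ℝ) x :=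
      (innerSL ℝ : EuclideanSpace ℝ (Fin n) →L[ℝ] EuclideanSpace ℝ (Fin n) →L[ℝ] ℝ).hasFDerivAt
    have hB := hφ.smul hlin
    rw [hlap]
    have hval : ∀ i : Fin n, fderiv ℝ g x (EuclideanSpace.single i 1) (EuclideanSpace.single i 1)
        = 2*A*a*ψ₁ (a*‖x‖^2) + 4*A*a^2*ψ₂ (a*‖x‖^2) * (x i)^2 := by
      intro i
      rw [show fderiv ℝ g x = _ from hB.fderiv]
      simp [ContinuousLinearMap.add_apply, ContinuousLinearMap.smul_apply,
        ContinuousLinearMap.smulRight_apply, innerSL_apply_apply, EuclideanSpace.inner_single_left,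
        EuclideanSpace.inner_single_right, EuclideanSpace.single_apply]
      erw [innerSL_apply_apply]
      simp
      ring
    simp only [hval]
    rw [Finset.sum_add_distrib, Finset.sum_const, Finset.card_univ, Fintype.card_fin,
      ← Finset.mul_sum, ← norm_sq_eq]
    simp only [nsmul_eq_mul]
    ring

lemma rpow_sub_one' {t : ℝ} (ht : 0 < t) (p : ℝ) : t ^ (p-1) = t ^ p / t := by
  rw [Real.rpow_sub ht, Real.rpow_one]

lemma rpow_sub_two' {t : ℝ} (ht : 0 < t) (p : ℝ) : t ^ (p-2) = t ^ p / t^2 := by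
  rw [Real.rpow_sub ht, show ((2:ℝ)) = ((2:ℕ):ℝ) by norm_num, Real.rpow_natCast]

lemma zfun_hasDerivAt (γ C t : ℝ) (hC : 0 < C) (ht : 0 < t) :
    HasDerivAt (fun s : ℝ => C / s ^ γ) (-γ * (C / t ^ γ) / t) t := by
  have h1 : HasDerivAt (fun s : ℝ => s ^ (-γ)) (-γ * t ^ (-γ - 1)) t :=
    Real.hasDerivAt_rpow_const (Or.inl ht.ne')
  have h2 := h1.const_mul C
  have hev : (fun s : ℝ => C / s ^ γ) =ᶠ[𝓝 t] (fun s => C * s ^ (-γ)) := by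
    filter_upwards [eventually_gt_nhds ht] with s hs
    rw [Real.rpow_neg hs.le, div_eq_mul_inv]
  have h3 := h2.congr_of_eventuallyEq hev
  refine h3.congr_deriv ?_
  rw [rpow_sub_one' ht, Real.rpow_neg ht.le]
  ring

lemma time1 (hd1 : ∀ w ∈ Ioo (0:ℝ) 1, HasDerivAt ψ (ψ₁ w) w)
    (β γ C : ℝ) (hC : 0 ≤ C) (t : ℝ) (ht : 0 < t) (hz : C / t ^ γ < 1) :
    HasDerivAt (fun s : ℝ => s ^ (1-β) * ψ (C / s ^ γ))
      (t^(1-β)/t * ((1-β) * ψ (C/t^γ) - γ * (C/t^γ) * ψ₁ (C/t^γ))) t := by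
  have hr : HasDerivAt (fun s : ℝ => s ^ (1-β)) ((1-β) * t ^ (1-β-1)) t :=
    Real.hasDerivAt_rpow_const (Or.inl ht.ne')
  rcases eq_or_lt_of_le hC with hC0 | hC0
  · have hfun : (fun s : ℝ => s ^ (1-β) * ψ (C / s ^ γ)) = fun s => s ^ (1-β) * ψ 0 := by
      funext s; rw [← hC0, zero_div]
    rw [hfun]
    refine (hr.mul_const (ψ 0)).congr_deriv ?_
    rw [← hC0, zero_div, rpow_sub_one' ht]
    ring
  · have hw : C / t ^ γ ∈ Ioo (0:ℝ) 1 := ⟨div_pos hC0 (Real.rpow_pos_of_pos ht γ), hz⟩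
    have hcomp := (hd1 _ hw).comp t (zfun_hasDerivAt γ C t hC0 ht)
    refine (hr.mul hcomp).congr_deriv ?_
    simp only [Function.comp_apply]
    rw [rpow_sub_one' ht]
    ring

lemma time2 (hd1 : ∀ w ∈ Ioo (0:ℝ) 1, HasDerivAt ψ (ψ₁ w) w)
    (hd2 : ∀ w ∈ Ioo (0:ℝ) 1, HasDerivAt ψ₁ (ψ₂ w) w)
    (β γ C : ℝ) (hC : 0 ≤ C) (t : ℝ) (ht : 0 < t) (hz : C / t ^ γ < 1) :
    HasDerivAt (fun s : ℝ => s^(1-β)/s * ((1-β) * ψ (C/s^γ) - γ * (C/s^γ) * ψ₁ (C/s^γ)))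
      (t^(1-β)/t^2 * (γ^2*(C/t^γ)^2*ψ₂ (C/t^γ) + (γ*(2*β-1)+γ^2)*(C/t^γ)*ψ₁ (C/t^γ)
        + β*(β-1)*ψ (C/t^γ))) t := by
  have hF : HasDerivAt (fun s : ℝ => s ^ (1-β-1)) ((1-β-1) * t ^ (1-β-1-1)) t :=
    Real.hasDerivAt_rpow_const (Or.inl ht.ne')
  have ht2 : t ^ (1-β-1) = t^(1-β)/t := rpow_sub_one' ht _
  have ht3 : t ^ (1-β-1-1) = t^(1-β)/t^2 := by
    rw [show (1-β-1-1) = (1-β) - 2 by ring]; exact rpow_sub_two' ht _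
  rcases eq_or_lt_of_le hC with hC0 | hC0
  · have hfun : (fun s : ℝ => s^(1-β)/s * ((1-β) * ψ (C/s^γ) - γ * (C/s^γ) * ψ₁ (C/s^γ)))
        = fun s => s^(1-β)/s * ((1-β) * ψ 0) := by
      funext s; rw [← hC0, zero_div]; ring_nf
    rw [hfun]
    have hout2 : (fun s : ℝ => s^(1-β)/s * ((1-β) * ψ 0))
        =ᶠ[𝓝 t] (fun s => s ^ (1-β-1) * ((1-β) * ψ 0)) := by
      filter_upwards [eventually_gt_nhds ht] with s hs
      rw [rpow_sub_one' hs]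
    have h2 := (hF.mul_const ((1-β) * ψ 0)).congr_of_eventuallyEq hout2
    refine h2.congr_deriv ?_
    rw [← hC0, zero_div, ht3]
    ring
  · have hw : C / t ^ γ ∈ Ioo (0:ℝ) 1 := ⟨div_pos hC0 (Real.rpow_pos_of_pos ht γ), hz⟩
    have hzd := zfun_hasDerivAt γ C t hC0 ht
    have hcψ := (hd1 _ hw).comp t hzd
    have hcψ₁ := (hd2 _ hw).comp t hzd
    have hinner := (hcψ.const_mul (1-β)).sub (((hzd.const_mul γ).mul hcψ₁))
    have hout2 : (fun s : ℝ => s^(1-β)/s * ((1-β) * ψ (C/s^γ) - γ * (C/s^γ) * ψ₁ (C/s^γ)))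
        =ᶠ[𝓝 t] (fun s => s ^ (1-β-1) * ((1-β) * ψ (C/s^γ) - γ * (C/s^γ) * ψ₁ (C/s^γ))) := by
      filter_upwards [eventually_gt_nhds ht] with s hs
      rw [rpow_sub_one' hs]
    have h2 := (hF.mul hinner).congr_of_eventuallyEq hout2
    refine h2.congr_deriv ?_
    simp only [Function.comp_apply, Pi.sub_apply, Pi.mul_apply]
    rw [ht2, ht3]
    ring

lemma time3 (hd1 : ∀ w ∈ Ioo (0:ℝ) 1, HasDerivAt ψ (ψ₁ w) w)
    (μ β γ C : ℝ) (hC : 0 ≤ C) (t : ℝ) (ht : 0 < t) (hz : C / t ^ γ < 1) :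
    HasDerivAt (fun s : ℝ => μ/s * (s ^ (1-β) * ψ (C / s ^ γ)))
      (t^(1-β)/t^2 * μ * (-β * ψ (C/t^γ) - γ * (C/t^γ) * ψ₁ (C/t^γ))) t := by
  have hμ : HasDerivAt (fun s : ℝ => μ/s) (-(μ/t^2)) t := by
    have := (hasDerivAt_inv ht.ne').const_mul μ
    simp only [div_eq_mul_inv]
    refine this.congr_deriv ?_
    ring
  have h1 := time1 hd1 β γ C hC t ht hz
  refine (hμ.mul h1).congr_deriv ?_
  ring

lemma time_dd (hd1 : ∀ w ∈ Ioo (0:ℝ) 1, HasDerivAt ψ (ψ₁ w) w)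
    (hd2 : ∀ w ∈ Ioo (0:ℝ) 1, HasDerivAt ψ₁ (ψ₂ w) w)
    (β γ C : ℝ) (hC : 0 ≤ C) (t : ℝ) (ht : 0 < t) (hz : C / t ^ γ < 1) :
    deriv (deriv (fun s : ℝ => s ^ (1-β) * ψ (C / s ^ γ))) t
      = t^(1-β)/t^2 * (γ^2*(C/t^γ)^2*ψ₂ (C/t^γ) + (γ*(2*β-1)+γ^2)*(C/t^γ)*ψ₁ (C/t^γ)
        + β*(β-1)*ψ (C/t^γ)) := by
  have hcont : ContinuousAt (fun s : ℝ => C / s ^ γ) t :=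
    continuousAt_const.div (Real.continuousAt_rpow_const t γ (Or.inl ht.ne'))
      (Real.rpow_pos_of_pos ht γ).ne'
  have hev : deriv (fun s : ℝ => s ^ (1-β) * ψ (C / s ^ γ))
      =ᶠ[𝓝 t] (fun s => s^(1-β)/s * ((1-β) * ψ (C/s^γ) - γ * (C/s^γ) * ψ₁ (C/s^γ))) := by
    filter_upwards [eventually_gt_nhds ht, hcont (Iio_mem_nhds hz)] with s hs1 hs2
    exact (time1 hd1 β γ C hC s hs1 hs2).deriv
  rw [hev.deriv_eq]
  exact (time2 hd1 hd2 β γ C hC t ht hz).deriv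

lemma ode_at_zero (N Λ K : ℝ)
    (hc0 : ContinuousWithinAt ψ (Ico 0 1) 0)
    (hc1 : ContinuousWithinAt ψ₁ (Ico 0 1) 0)
    (hc2 : ContinuousWithinAt ψ₂ (Ico 0 1) 0)
    (h : ∀ u ∈ Ioo (0:ℝ) 1, u*(1-u)*ψ₂ u + (N - Λ*u)*ψ₁ u - K*ψ u = 0) :
    N * ψ₁ 0 - K * ψ 0 = 0 := by
  have hne : (𝓝[Ioo (0:ℝ) 1] 0).NeBot := by
    rw [← mem_closure_iff_nhdsWithin_neBot, closure_Ioo (by norm_num : (0:ℝ) ≠ 1)]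
    exact ⟨le_refl 0, zero_le_one⟩
  set F : ℝ → ℝ := fun u => u*(1-u)*ψ₂ u + (N - Λ*u)*ψ₁ u - K*ψ u with hF
  have hcF : ContinuousWithinAt F (Ico 0 1) 0 := by
    apply ContinuousWithinAt.sub
    · apply ContinuousWithinAt.add
      · exact (continuousWithinAt_id.mul
          (continuousWithinAt_const.sub continuousWithinAt_id)).mul hc2
      · exact (continuousWithinAt_const.sub
          (continuousWithinAt_const.mul continuousWithinAt_id)).mul hc1
    · exact continuousWithinAt_const.mul hc0
  have ht1 : Tendsto F (𝓝[Ioo (0:ℝ) 1] 0) (𝓝 (F 0)) :=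
    hcF.tendsto.mono_left (nhdsWithin_mono 0 Ioo_subset_Ico_self)
  have ht2 : Tendsto F (𝓝[Ioo (0:ℝ) 1] 0) (𝓝 0) := by
    have hev : F =ᶠ[𝓝[Ioo (0:ℝ) 1] 0] fun _ => 0 := by
      filter_upwards [self_mem_nhdsWithin] with u hu
      exact h u hu
    exact Tendsto.congr' hev.symm tendsto_const_nhds
  have := tendsto_nhds_unique ht1 ht2
  rw [hF] at this
  simp only at this
  linarith [this]

set_option maxHeartbeats 1000000 in
lemma pde_identity {n : ℕ}
    (hd0 : HasDerivWithinAt ψ (ψ₁ 0) (Ico 0 1) 0)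
    (hd1 : ∀ w ∈ Ioo (0:ℝ) 1, HasDerivAt ψ (ψ₁ w) w)
    (hd2 : ∀ w ∈ Ioo (0:ℝ) 1, HasDerivAt ψ₁ (ψ₂ w) w)
    (hc1 : ContinuousWithinAt ψ₁ (Ico 0 1) 0)
    (m μ ν β : ℝ) (hm1 : 0 < m+1)
    (t : ℝ) (ht : 0 < t) (x : EuclideanSpace ℝ (Fin n))
    (hz : (m+1)^2 * ‖x‖^2 / t ^ (2*(m+1)) < 1) :
    deriv (deriv (fun s : ℝ => s ^ (1-β) * ψ ((m+1)^2 * ‖x‖^2 / s ^ (2*(m+1))))) t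
      - t ^ (2*m) * lap (fun y => t ^ (1-β) * ψ ((m+1)^2 * ‖y‖^2 / t ^ (2*(m+1)))) x
      - deriv (fun s : ℝ => μ / s * (s ^ (1-β) * ψ ((m+1)^2 * ‖x‖^2 / s ^ (2*(m+1))))) t
      + ν^2 / t^2 * (t ^ (1-β) * ψ ((m+1)^2 * ‖x‖^2 / t ^ (2*(m+1))))
    = (-4*(m+1)^2) * (t^(1-β)/t^2) *
      (((m+1)^2 * ‖x‖^2 / t ^ (2*(m+1))) * (1 - ((m+1)^2 * ‖x‖^2 / t ^ (2*(m+1))))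
          * ψ₂ ((m+1)^2 * ‖x‖^2 / t ^ (2*(m+1)))
       + ((n:ℝ)/2 - ((β-1)/(m+1) + 1/(2*(m+1)) + μ/(2*(m+1)) + 1)
          * ((m+1)^2 * ‖x‖^2 / t ^ (2*(m+1)))) * ψ₁ ((m+1)^2 * ‖x‖^2 / t ^ (2*(m+1)))
       - (β*(β+μ-1)+ν^2)/(4*(m+1)^2) * ψ ((m+1)^2 * ‖x‖^2 / t ^ (2*(m+1)))) := by
  have hC : 0 ≤ (m+1)^2 * ‖x‖^2 := by positivity
  rw [time_dd hd1 hd2 β (2*(m+1)) _ hC t ht hz]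
  rw [(time3 hd1 μ β (2*(m+1)) _ hC t ht hz).deriv]
  have ha : 0 < (m+1)^2 / t^(2*(m+1)) := by positivity
  have harg : ∀ y : EuclideanSpace ℝ (Fin n),
      (m+1)^2 * ‖y‖^2 / t^(2*(m+1)) = ((m+1)^2/t^(2*(m+1))) * ‖y‖^2 :=
    fun y => (div_mul_eq_mul_div _ _ _).symm
  have hfun : (fun y : EuclideanSpace ℝ (Fin n) =>
        t ^ (1-β) * ψ ((m+1)^2 * ‖y‖^2 / t ^ (2*(m+1))))
      = (fun y => t ^ (1-β) * ψ (((m+1)^2/t^(2*(m+1))) * ‖y‖^2)) := by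
    funext y; rw [harg y]
  rw [hfun, lap_eq hd0 hd1 hd2 hc1 _ _ ha x (by rw [← harg x]; exact hz)]
  rw [← harg x]
  have hrel : t^(2*(m+1)) = t^(2*m) * t^2 := by
    rw [show 2*(m+1) = 2*m + 2 by ring, Real.rpow_add ht,
      show ((2:ℝ))=((2:ℕ):ℝ) by norm_num, Real.rpow_natCast]
  rw [hrel]
  have h1 : (t:ℝ) ≠ 0 := ht.ne'
  have h2 : t^(2*m) ≠ 0 := (Real.rpow_pos_of_pos ht _).ne'
  field_simp
  ring

end Aux

set_option maxHeartbeats 1000000 in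
theorem stmt_3 (m μ ν β : ℝ) (n : ℕ) (hm : 0 ≤ m) (hn : 1 ≤ n) (hμ : 0 ≤ μ) (hν : 0 ≤ ν)
    (hδ : 0 < (μ - 1) ^ 2 - 4 * ν ^ 2) (ψ : ℝ → ℝ) (hψ : ContDiffOn ℝ 2 ψ (Ico 0 1)) :
    let z : ℝ → EuclideanSpace ℝ (Fin n) → ℝ :=
      fun t x => (m + 1) ^ 2 * ‖x‖ ^ 2 / t ^ (2 * (m + 1))
    let Φ : ℝ → EuclideanSpace ℝ (Fin n) → ℝ := fun t x => t ^ (1 - β) * ψ (z t x)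
    ((∀ t : ℝ, 1 ≤ t → ∀ x : EuclideanSpace ℝ (Fin n), ‖x‖ < t ^ (m + 1) / (m + 1) →
        deriv (deriv (fun s => Φ s x)) t - t ^ (2 * m) * lap (Φ t) x -
          deriv (fun s => μ / s * Φ s x) t + ν ^ 2 / t ^ 2 * Φ t x = 0) ↔
      (∀ w ∈ Ioo (0 : ℝ) 1,
        w * (1 - w) * deriv (deriv ψ) w +
          ((n : ℝ) / 2 - ((β - 1) / (m + 1) + 1 / (2 * (m + 1)) + μ / (2 * (m + 1)) + 1) * w) *
            deriv ψ w -
          (β * (β + μ - 1) + ν ^ 2) / (4 * (m + 1) ^ 2) * ψ w = 0)) := by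
  intro z Φ
  have hΦdef : Φ = fun t (x : EuclideanSpace ℝ (Fin n)) =>
      t ^ (1 - β) * ψ ((m + 1) ^ 2 * ‖x‖ ^ 2 / t ^ (2 * (m + 1))) := rfl
  have hm1 : 0 < m + 1 := by linarith
  set ψ₁ : ℝ → ℝ := derivWithin ψ (Ico 0 1) with hψ₁
  set ψ₂ : ℝ → ℝ := derivWithin ψ₁ (Ico 0 1) with hψ₂
  have hd0 : HasDerivWithinAt ψ (ψ₁ 0) (Ico 0 1) 0 := oneD_d0 hψ
  have hd1 : ∀ w ∈ Ioo (0:ℝ) 1, HasDerivAt ψ (ψ₁ w) w := fun w hw => (oneD_d1 hψ hw).1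
  have hd2 : ∀ w ∈ Ioo (0:ℝ) 1, HasDerivAt ψ₁ (ψ₂ w) w := fun w hw => (oneD_d2 hψ hw).1
  have hc1 : ContinuousWithinAt ψ₁ (Ico 0 1) 0 := oneD_c0 hψ
  constructor
  · -- PDE → ODE
    intro hPDE w hw
    set x : EuclideanSpace ℝ (Fin n) :=
      EuclideanSpace.single (⟨0, hn⟩ : Fin n) (Real.sqrt w / (m+1)) with hxdef
    have hnx : ‖x‖ = Real.sqrt w / (m+1) := by
      rw [hxdef, EuclideanSpace.norm_single, Real.norm_eq_abs,
        abs_of_nonneg (by positivity)]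
    have hxlt : ‖x‖ < (1:ℝ) ^ (m + 1) / (m + 1) := by
      rw [hnx, Real.one_rpow]
      have h1 : Real.sqrt w < 1 := by
        rw [show (1:ℝ) = Real.sqrt 1 by simp]
        exact Real.sqrt_lt_sqrt hw.1.le hw.2
      exact (div_lt_div_iff_of_pos_right hm1).2 h1
    have h0 := hPDE 1 le_rfl x hxlt
    have hzw : (m+1)^2 * ‖x‖^2 / (1:ℝ) ^ (2*(m+1)) = w := by
      rw [hnx, Real.one_rpow, div_one, div_pow, Real.sq_sqrt hw.1.le]
      field_simp
    simp only [hΦdef] at h0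
    rw [pde_identity hd0 hd1 hd2 hc1 m μ ν β hm1 1 one_pos x
      (by rw [hzw]; exact hw.2)] at h0
    rw [hzw] at h0
    have hfac : (-4*(m+1)^2) * ((1:ℝ)^(1-β)/(1:ℝ)^2) ≠ 0 := by
      rw [Real.one_rpow]
      apply ne_of_lt
      have h4 := pow_pos hm1 2
      nlinarith
    have hE := (mul_eq_zero.1 h0).resolve_left hfac
    rw [← (oneD_d1 hψ hw).2, ← (oneD_d2 hψ hw).2]
    exact hE
  · intro hODE t ht x hx
    have ht0 : (0:ℝ) < t := lt_of_lt_of_le one_pos ht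
    have hpow : t^(2*(m+1)) = (t^(m+1))^2 := by
      rw [show 2*(m+1) = (m+1)*2 by ring, Real.rpow_mul ht0.le,
        show ((2:ℝ))=((2:ℕ):ℝ) by norm_num, Real.rpow_natCast]
    have htm : 0 < t^(m+1) := Real.rpow_pos_of_pos ht0 _
    have h2 : (m+1)*‖x‖ < t^(m+1) := by
      rw [lt_div_iff₀ hm1] at hx
      linarith [hx]
    have hzlt : (m+1)^2 * ‖x‖^2 / t^(2*(m+1)) < 1 := by
      rw [hpow, div_lt_one (by positivity)]
      calc (m+1)^2 * ‖x‖^2 = ((m+1)*‖x‖)^2 := by ring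
      _ < (t^(m+1))^2 := by
          apply pow_lt_pow_left₀ h2 (by positivity)
          norm_num
    simp only [hΦdef]
    rw [pde_identity hd0 hd1 hd2 hc1 m μ ν β hm1 t ht0 x hzlt]
    set u := (m+1)^2 * ‖x‖^2 / t^(2*(m+1)) with hu
    have hu0 : 0 ≤ u := by positivity
    have hEu : u*(1-u)*ψ₂ u + ((n:ℝ)/2 - ((β-1)/(m+1) + 1/(2*(m+1)) + μ/(2*(m+1)) + 1)*u)*ψ₁ u
        - (β*(β+μ-1)+ν^2)/(4*(m+1)^2)*ψ u = 0 := by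
      rcases eq_or_lt_of_le hu0 with hu0' | hu0'
      · rw [← hu0']
        have hc0ψ : ContinuousWithinAt ψ (Ico 0 1) 0 :=
          hψ.continuousOn 0 (by constructor <;> norm_num)
        have h00 := ode_at_zero (ψ := ψ) (ψ₁ := ψ₁) (ψ₂ := ψ₂) ((n:ℝ)/2)
          ((β-1)/(m+1) + 1/(2*(m+1)) + μ/(2*(m+1)) + 1)
          ((β*(β+μ-1)+ν^2)/(4*(m+1)^2)) hc0ψ hc1 (oneD_c0' hψ)
          (fun v hv => by
            rw [hψ₂, hψ₁, (oneD_d1 hψ hv).2, (oneD_d2 hψ hv).2]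
            exact hODE v hv)
        linear_combination h00
      · have hv : u ∈ Ioo (0:ℝ) 1 := ⟨hu0', hzlt⟩
        rw [hψ₂, hψ₁, (oneD_d1 hψ hv).2, (oneD_d2 hψ hv).2]
        exact hODE u hv
    rw [hEu, mul_zero]
end

section
/- Let H : [1,∞) → [0,∞) be continuous, β real, and define I(t) = ∫₁ᵗ (t-s) s H(s) ds and J(t) = ∫₁ᵗ (1+s)^{-3} I(s) ds for t ≥ 1. Then for every t ≥ 1, t² J(t) ≤ (1/2) ∫₁ᵗ (t-s)² H(s) ds. -/
open intervalIntegral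

theorem stmt_12 (H : ℝ → ℝ) (β : ℝ) (hcont : ContinuousOn H (Set.Ici 1))
    (hnn : ∀ t ∈ Set.Ici (1 : ℝ), 0 ≤ H t) :
    let I : ℝ → ℝ := fun t => ∫ s in (1 : ℝ)..t, (t - s) * s * H s
    let J : ℝ → ℝ := fun t => ∫ s in (1 : ℝ)..t, ((1 + s) ^ 3)⁻¹ * I s
    ∀ t : ℝ, 1 ≤ t → t ^ 2 * J t ≤ (1 / 2) * ∫ s in (1 : ℝ)..t, (t - s) ^ 2 * H s := by
  intro I J t ht
  have h1t : (0:ℝ) < 1 + t := by linarith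
  have hsubset : Set.Icc (1:ℝ) t ⊆ Set.Ici 1 := fun x hx => hx.1
  have hHc : ContinuousOn H (Set.Icc 1 t) := hcont.mono hsubset
  have hne' : ∀ s ∈ Set.Icc (1:ℝ) t, (1:ℝ) + s ≠ 0 := fun s hs => by
    have := hs.1; intro h; linarith
  have hf1c : ContinuousOn (fun s => s * H s) (Set.Icc 1 t) := continuousOn_id.mul hHc
  have hf2c : ContinuousOn (fun s => s^2 * H s) (Set.Icc 1 t) :=
    (continuousOn_id.pow 2).mul hHc
  -- integrability helpers
  have hint : ∀ (f : ℝ → ℝ), ContinuousOn f (Set.Icc 1 t) →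
      ∀ x ∈ Set.Icc (1:ℝ) t, IntervalIntegrable f MeasureTheory.volume 1 x := by
    intro f hf x hx
    apply ContinuousOn.intervalIntegrable
    rw [Set.uIcc_of_le hx.1]
    exact hf.mono (Set.Icc_subset_Icc le_rfl hx.2)
  have hII : ∀ (f : ℝ → ℝ), ContinuousOn f (Set.Icc 1 t) →
      IntervalIntegrable f MeasureTheory.volume 1 t := fun f hf =>
    hint f hf t ⟨ht, le_rfl⟩
  set P : ℝ → ℝ := fun x => ∫ s in (1:ℝ)..x, s * H s with hPdef
  set Q : ℝ → ℝ := fun x => ∫ s in (1:ℝ)..x, s^2 * H s with hQdef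
  have hIPQ : ∀ x ∈ Set.Icc (1:ℝ) t, I x = x * P x - Q x := by
    intro x hx
    have h1 := hint _ hf1c x hx
    have h2 := hint _ hf2c x hx
    show (∫ s in (1:ℝ)..x, (x - s) * s * H s) = _
    have e : ∀ s : ℝ, (x - s) * s * H s = x * (s * H s) - s^2 * H s := by
      intro s; ring
    simp_rw [e]
    rw [intervalIntegral.integral_sub (h1.const_mul x) h2,
      intervalIntegral.integral_const_mul]
  have hPc : ContinuousOn P (Set.Icc 1 t) := by
    have hI : MeasureTheory.IntegrableOn (fun s => s * H s) (Set.uIcc 1 t) := by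
      rw [Set.uIcc_of_le ht]; exact hf1c.integrableOn_Icc
    have := intervalIntegral.continuousOn_primitive_interval hI
    rwa [Set.uIcc_of_le ht] at this
  have hQc : ContinuousOn Q (Set.Icc 1 t) := by
    have hI : MeasureTheory.IntegrableOn (fun s => s^2 * H s) (Set.uIcc 1 t) := by
      rw [Set.uIcc_of_le ht]; exact hf2c.integrableOn_Icc
    have := intervalIntegral.continuousOn_primitive_interval hI
    rwa [Set.uIcc_of_le ht] at this
  have hIc : ContinuousOn I (Set.Icc 1 t) :=
    ContinuousOn.congr ((continuousOn_id.mul hPc).sub hQc) hIPQ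
  have hio : Set.Ioo (1:ℝ) t ⊆ Set.Icc 1 t := Set.Ioo_subset_Icc_self
  have hmeas1 : ∀ x ∈ Set.Ioo (1:ℝ) t,
      StronglyMeasurableAtFilter (fun s => s * H s) (nhds x) := by
    intro x hx
    refine ContinuousOn.stronglyMeasurableAtFilter isOpen_Ioi ?_ x hx.1
    exact continuousOn_id.mul (hcont.mono Set.Ioi_subset_Ici_self)
  have hmeas2 : ∀ x ∈ Set.Ioo (1:ℝ) t,
      StronglyMeasurableAtFilter (fun s => s^2 * H s) (nhds x) := by
    intro x hx
    refine ContinuousOn.stronglyMeasurableAtFilter isOpen_Ioi ?_ x hx.1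
    exact (continuousOn_id.pow 2).mul (hcont.mono Set.Ioi_subset_Ici_self)
  have hHca : ∀ x ∈ Set.Ioo (1:ℝ) t, ContinuousAt H x := fun x hx =>
    hcont.continuousAt (Ici_mem_nhds hx.1)
  have hPd : ∀ x ∈ Set.Ioo (1:ℝ) t, HasDerivAt P (x * H x) x := by
    intro x hx
    exact intervalIntegral.integral_hasDerivAt_right (hint _ hf1c x (hio hx))
      (hmeas1 x hx) (continuousAt_id.mul (hHca x hx))
  have hQd : ∀ x ∈ Set.Ioo (1:ℝ) t, HasDerivAt Q (x^2 * H x) x := by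
    intro x hx
    exact intervalIntegral.integral_hasDerivAt_right (hint _ hf2c x (hio hx))
      (hmeas2 x hx) ((continuousAt_id.pow 2).mul (hHca x hx))
  have hId : ∀ x ∈ Set.Ioo (1:ℝ) t, HasDerivAt I (P x) x := by
    intro x hx
    have h1 : HasDerivAt (fun y => y * P y - Q y) (1 * P x + x * (x * H x) - x^2 * H x) x :=
      ((hasDerivAt_id x).mul (hPd x hx)).sub (hQd x hx)
    have h2 : HasDerivAt (fun y => y * P y - Q y) (P x) x := by
      convert h1 using 1; ring
    apply h2.congr_of_eventuallyEq
    filter_upwards [Ioo_mem_nhds hx.1 hx.2] with y hy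
    exact hIPQ y (hio hy)
  -- the weight function and its derivatives
  set ψ : ℝ → ℝ := fun s => (t - s)^2 * (1 + s)⁻¹ with hψdef
  set ψd : ℝ → ℝ := fun s => -(2*(t-s)) * (1+s)⁻¹ - (t-s)^2 * ((1+s)^2)⁻¹ with hψddef
  set ψdd : ℝ → ℝ := fun s => 2*(1+t)^2 * ((1+s)^3)⁻¹ with hψdddef
  have hψd : ∀ s : ℝ, 1 ≤ s → HasDerivAt ψ (ψd s) s := by
    intro s hs
    have hne : (1:ℝ) + s ≠ 0 := by intro h; linarith
    have h1 : HasDerivAt (fun y : ℝ => (t - y)^2) (2*(t-s)^(2-1) * (-1)) s := by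
      exact_mod_cast ((hasDerivAt_id s).const_sub t).pow 2
    have h2 : HasDerivAt (fun y : ℝ => (1 + y)⁻¹) (-(1) / (1+s)^2) s :=
      ((hasDerivAt_id s).const_add 1).inv hne
    have h := h1.mul h2
    convert h using 1
    · rfl
    · rfl
    · rfl
    rw [hψddef]
    field_simp
    ring
  have hψdd : ∀ s : ℝ, 1 ≤ s → HasDerivAt ψd (ψdd s) s := by
    intro s hs
    have hne : (1:ℝ) + s ≠ 0 := by intro h; linarith
    have ha : HasDerivAt (fun y : ℝ => -(2*(t-y))) (-(2*(-1))) s :=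
      (((hasDerivAt_id s).const_sub t).const_mul 2).neg
    have h2 : HasDerivAt (fun y : ℝ => (1 + y)⁻¹) (-(1) / (1+s)^2) s :=
      ((hasDerivAt_id s).const_add 1).inv hne
    have h1 : HasDerivAt (fun y : ℝ => (t - y)^2) (2*(t-s)^(2-1) * (-1)) s := by
      exact_mod_cast ((hasDerivAt_id s).const_sub t).pow 2
    have h3 : HasDerivAt (fun y : ℝ => ((1 + y)^2)⁻¹)
        (-(2*(1+s)^(2-1)*1) / ((1+s)^2)^2) s := by
      have hb : HasDerivAt (fun y : ℝ => (1 + y)^2) (2*(1+s)^(2-1)*1) s := by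
        exact_mod_cast ((hasDerivAt_id s).const_add 1).pow 2
      exact hb.inv (pow_ne_zero 2 hne)
    have h := (ha.mul h2).sub (h1.mul h3)
    convert h using 1
    · rfl
    · rfl
    · rfl
    rw [hψdddef]
    field_simp
    ring
  -- continuity of the weight functions
  have hψc : ContinuousOn ψ (Set.Icc 1 t) := by
    apply ContinuousOn.mul (by fun_prop)
    exact ContinuousOn.inv₀ (by fun_prop) hne'
  have hψdc : ContinuousOn ψd (Set.Icc 1 t) := by
    apply ContinuousOn.sub
    · exact ContinuousOn.mul (by fun_prop)
        (ContinuousOn.inv₀ (by fun_prop) hne')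
    · exact ContinuousOn.mul (by fun_prop)
        (ContinuousOn.inv₀ (by fun_prop) (fun s hs => pow_ne_zero 2 (hne' s hs)))
  have hψddc : ContinuousOn ψdd (Set.Icc 1 t) := by
    exact ContinuousOn.mul (by fun_prop)
      (ContinuousOn.inv₀ (by fun_prop) (fun s hs => pow_ne_zero 3 (hne' s hs)))
  -- special values
  have hI1 : I 1 = 0 := intervalIntegral.integral_same
  have hP1 : P 1 = 0 := intervalIntegral.integral_same
  have hψt : ψ t = 0 := by rw [hψdef]; simp
  have hψdt : ψd t = 0 := by rw [hψddef]; simp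
  -- first integration by parts
  have i1 : IntervalIntegrable (fun s => ψdd s * I s) MeasureTheory.volume 1 t :=
    hII _ (hψddc.mul hIc)
  have i2 : IntervalIntegrable (fun s => ψd s * P s) MeasureTheory.volume 1 t :=
    hII _ (hψdc.mul hPc)
  have i3 : IntervalIntegrable (fun s => ψ s * (s * H s)) MeasureTheory.volume 1 t :=
    hII _ (hψc.mul hf1c)
  have E1 : (∫ s in (1:ℝ)..t, (ψdd s * I s + ψd s * P s)) = ψd t * I t - ψd 1 * I 1 := by
    apply intervalIntegral.integral_eq_sub_of_hasDerivAt_of_le ht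
    · exact ContinuousOn.mul hψdc hIc
    · intro x hx
      exact (hψdd x hx.1.le).mul (hId x hx)
    · exact i1.add i2
  have E2 : (∫ s in (1:ℝ)..t, (ψd s * P s + ψ s * (s * H s))) = ψ t * P t - ψ 1 * P 1 := by
    apply intervalIntegral.integral_eq_sub_of_hasDerivAt_of_le ht
    · exact ContinuousOn.mul hψc hPc
    · intro x hx
      exact (hψd x hx.1.le).mul (hPd x hx)
    · exact i2.add i3
  have e1' : (∫ s in (1:ℝ)..t, ψdd s * I s) + (∫ s in (1:ℝ)..t, ψd s * P s) = 0 := by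
    rw [← intervalIntegral.integral_add i1 i2, E1, hψdt, hI1]; ring
  have e2' : (∫ s in (1:ℝ)..t, ψd s * P s) + (∫ s in (1:ℝ)..t, ψ s * (s * H s)) = 0 := by
    rw [← intervalIntegral.integral_add i2 i3, E2, hψt, hP1]; ring
  have key : (∫ s in (1:ℝ)..t, ψdd s * I s) = ∫ s in (1:ℝ)..t, ψ s * (s * H s) := by
    linarith
  -- rewrite J
  have hJ : J t = (2*(1+t)^2)⁻¹ * ∫ s in (1:ℝ)..t, ψdd s * I s := by
    show (∫ s in (1:ℝ)..t, ((1+s)^3)⁻¹ * I s) = _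
    rw [← intervalIntegral.integral_const_mul]
    apply intervalIntegral.integral_congr
    intro s _
    show ((1+s)^3)⁻¹ * I s = (2*(1+t)^2)⁻¹ * (ψdd s * I s)
    rw [hψdddef]
    have h2t : (2:ℝ)*(1+t)^2 ≠ 0 := by positivity
    field_simp
    try ring
  rw [hJ, key]
  have lhs_eq : t ^ 2 * ((2*(1+t)^2)⁻¹ * ∫ s in (1:ℝ)..t, ψ s * (s * H s))
      = ∫ s in (1:ℝ)..t, (t^2 * (2*(1+t)^2)⁻¹) * (ψ s * (s * H s)) := by
    rw [intervalIntegral.integral_const_mul]; ring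
  have rhs_eq : (1/2 : ℝ) * (∫ s in (1:ℝ)..t, (t - s)^2 * H s)
      = ∫ s in (1:ℝ)..t, (1/2 : ℝ) * ((t - s)^2 * H s) := by
    rw [intervalIntegral.integral_const_mul]
  rw [lhs_eq, rhs_eq]
  apply intervalIntegral.integral_mono_on ht
  · exact (hII _ (hψc.mul hf1c)).const_mul _
  · exact (hII _ (((by fun_prop : ContinuousOn (fun s : ℝ => (t-s)^2) (Set.Icc 1 t))).mul hHc)).const_mul _
  · intro s hs
    have hs1 : (1:ℝ) ≤ s := hs.1
    have hst : s ≤ t := hs.2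
    have hHs : 0 ≤ H s := hnn s hs1
    have h1s : (0:ℝ) < 1 + s := by linarith
    have hd : (0:ℝ) < 2*(1+t)^2*(1+s) := by positivity
    have keyineq : t^2 * s * ((t-s)^2 * H s) ≤ (1+t)^2 * (1+s) * ((t-s)^2 * H s) := by
      have hts : t^2 * s ≤ (1+t)^2 * (1+s) := by nlinarith
      have hnn2 : (0:ℝ) ≤ (t-s)^2 * H s := by positivity
      exact mul_le_mul_of_nonneg_right hts hnn2
    have expand1 : t^2 * (2*(1+t)^2)⁻¹ * (ψ s * (s * H s))
        = (t^2 * s * ((t-s)^2 * H s)) / (2*(1+t)^2*(1+s)) := by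
      rw [hψdef]
      field_simp
    have expand2 : (1/2 : ℝ) * ((t - s)^2 * H s)
        = ((1+t)^2 * (1+s) * ((t-s)^2 * H s)) / (2*(1+t)^2*(1+s)) := by
      field_simp
    rw [expand1, expand2]
    exact div_le_div_of_nonneg_right keyineq hd.le |>.trans_eq rfl
end

section
/- Let m ≥ 0 and for t ≥ 1 define λ(t) = (1/(m+1))^{1/(2(m+1))} t^{1/2} K_{1/(2(m+1))}(t^{m+1}/(m+1)), where K_l(z) = ∫₀^∞ e^{-z cosh y} cosh(l y) dy is the modified Bessel function of the second kind. Then λ''(t) - t^{2m} λ(t) = 0 for all t ≥ 1. -/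
open Real MeasureTheory Set Filter Topology

/-- The modified Bessel function of the second kind,
`K_l(z) = ∫₀^∞ e^{-z cosh y} cosh (l y) dy`. -/
noncomputable def besselK (l z : ℝ) : ℝ :=
  ∫ y in Set.Ioi (0 : ℝ), Real.exp (-z * Real.cosh y) * Real.cosh (l * y)

noncomputable def besselKd (l z : ℝ) : ℝ :=
  ∫ y in Set.Ioi (0 : ℝ), -(Real.exp (-z * Real.cosh y) * (Real.cosh y * Real.cosh (l * y)))

noncomputable def besselKdd (l z : ℝ) : ℝ :=
  ∫ y in Set.Ioi (0 : ℝ), Real.exp (-z * Real.cosh y) * (Real.cosh y ^ 2 * Real.cosh (l * y))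



lemma exp_ge_quarter_sq {y : ℝ} (hy : 0 ≤ y) : y^2/4 ≤ Real.exp y := by
  have h := Real.add_one_le_exp (y/2)
  have h2 : Real.exp y = Real.exp (y/2) * Real.exp (y/2) := by
    rw [← Real.exp_add]; ring_nf
  nlinarith [Real.exp_pos (y/2)]

lemma integrableOn_exp_sub (z k : ℝ) (hz : 0 < z) :
    IntegrableOn (fun y => Real.exp (k * y - z * Real.exp y)) (Set.Ioi 0) := by
  have hint : IntegrableOn (fun y => Real.exp ((k+1)^2/z) * Real.exp (-1 * y)) (Set.Ioi 0) :=
    (exp_neg_integrableOn_Ioi 0 one_pos).const_mul _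
  refine hint.mono' (Continuous.aestronglyMeasurable (by continuity)) ?_
  filter_upwards [ae_restrict_mem measurableSet_Ioi] with y hy
  have hy0 : (0:ℝ) ≤ y := le_of_lt hy
  rw [Real.norm_eq_abs, abs_of_nonneg (Real.exp_pos _).le, ← Real.exp_add]
  apply Real.exp_le_exp.2
  have h1 : y^2/4 ≤ Real.exp y := exp_ge_quarter_sq hy0
  have key : z * (k * y - z * Real.exp y) ≤ z * ((k+1)^2/z + -1 * y) := by
    have hzz : z * ((k+1)^2/z + -1*y) = (k+1)^2 - z*y := by field_simp; ring
    rw [hzz]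
    nlinarith [sq_nonneg ((k+1) - z*y/2), mul_le_mul_of_nonneg_left h1 (mul_nonneg hz.le hz.le)]
  exact le_of_mul_le_mul_left key hz

lemma cosh_ge_half_exp (y : ℝ) : Real.exp y / 2 ≤ Real.cosh y := by
  rw [Real.cosh_eq]; nlinarith [Real.exp_pos (-y)]

lemma cosh_le_exp_abs (x : ℝ) : Real.cosh x ≤ Real.exp |x| := by
  rw [Real.cosh_eq]
  have h1 : Real.exp x ≤ Real.exp |x| := Real.exp_le_exp.2 (le_abs_self x)
  have h2 : Real.exp (-x) ≤ Real.exp |x| := Real.exp_le_exp.2 (neg_le_abs x)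
  linarith

lemma abs_sinh_le_exp_abs (x : ℝ) : |Real.sinh x| ≤ Real.exp |x| := by
  rw [Real.sinh_eq, abs_div]
  have h1 : Real.exp x ≤ Real.exp |x| := Real.exp_le_exp.2 (le_abs_self x)
  have h2 : Real.exp (-x) ≤ Real.exp |x| := Real.exp_le_exp.2 (neg_le_abs x)
  have habs : |Real.exp x - Real.exp (-x)| ≤ Real.exp x + Real.exp (-x) :=
    abs_le.2 ⟨by linarith [Real.exp_pos x, Real.exp_pos (-x)], by linarith [Real.exp_pos (-x)]⟩
  rw [abs_of_nonneg (by norm_num : (0:ℝ) ≤ 2)]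
  linarith

lemma integrableOn_kernel (z k C : ℝ) (hz : 0 < z) {p : ℝ → ℝ} (hp : Continuous p)
    (hbound : ∀ y, 0 ≤ y → |p y| ≤ C * Real.exp (k * y)) :
    IntegrableOn (fun y => Real.exp (-z * Real.cosh y) * p y) (Set.Ioi 0) := by
  have hint : IntegrableOn (fun y => C * Real.exp (k * y - z/2 * Real.exp y)) (Set.Ioi 0) :=
    (integrableOn_exp_sub (z/2) k (by linarith)).const_mul C
  refine hint.mono' (Continuous.aestronglyMeasurable (by continuity)) ?_
  filter_upwards [ae_restrict_mem measurableSet_Ioi] with y hy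
  have hy0 : (0:ℝ) ≤ y := le_of_lt hy
  have hC : 0 ≤ C := by
    have := hbound 0 le_rfl
    have := abs_nonneg (p 0)
    nlinarith [Real.exp_pos (k*0)]
  rw [Real.norm_eq_abs, abs_mul, abs_of_nonneg (Real.exp_pos _).le]
  have h1 : Real.exp (-z * Real.cosh y) ≤ Real.exp (- (z/2 * Real.exp y)) := by
    apply Real.exp_le_exp.2
    have := cosh_ge_half_exp y
    nlinarith
  calc Real.exp (-z * Real.cosh y) * |p y|
      ≤ Real.exp (-(z/2 * Real.exp y)) * (C * Real.exp (k*y)) := by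
        apply mul_le_mul h1 (hbound y hy0) (abs_nonneg _) (Real.exp_pos _).le
    _ = C * Real.exp (k * y - z/2 * Real.exp y) := by
        rw [mul_comm, mul_assoc, ← Real.exp_add, ← sub_eq_add_neg]

lemma cosh_mul_le (l : ℝ) {y : ℝ} (hy : 0 ≤ y) : Real.cosh (l * y) ≤ Real.exp (|l| * y) := by
  have := cosh_le_exp_abs (l * y)
  rwa [abs_mul, abs_of_nonneg hy] at this

lemma cosh_le_exp {y : ℝ} (hy : 0 ≤ y) : Real.cosh y ≤ Real.exp y := by
  have := cosh_le_exp_abs y; rwa [abs_of_nonneg hy] at this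

lemma integrable0 (l : ℝ) {z : ℝ} (hz : 0 < z) :
    IntegrableOn (fun y => Real.exp (-z * Real.cosh y) * Real.cosh (l * y)) (Set.Ioi 0) := by
  refine integrableOn_kernel z |l| 1 hz (by continuity) fun y hy => ?_
  rw [abs_of_nonneg (Real.cosh_pos _).le, one_mul]
  exact cosh_mul_le l hy

lemma integrable1 (l : ℝ) {z : ℝ} (hz : 0 < z) :
    IntegrableOn (fun y => Real.exp (-z * Real.cosh y) * (Real.cosh y * Real.cosh (l * y)))
      (Set.Ioi 0) := by
  refine integrableOn_kernel z (1 + |l|) 1 hz (by continuity) fun y hy => ?_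
  rw [abs_of_nonneg (by positivity : (0:ℝ) ≤ Real.cosh y * Real.cosh (l*y)), one_mul,
    add_mul, one_mul, Real.exp_add]
  exact mul_le_mul (cosh_le_exp hy) (cosh_mul_le l hy) (Real.cosh_pos _).le (Real.exp_pos _).le

lemma integrable2 (l : ℝ) {z : ℝ} (hz : 0 < z) :
    IntegrableOn (fun y => Real.exp (-z * Real.cosh y) * (Real.cosh y ^ 2 * Real.cosh (l * y)))
      (Set.Ioi 0) := by
  refine integrableOn_kernel z (2 + |l|) 1 hz (by continuity) fun y hy => ?_
  rw [abs_of_nonneg (by positivity : (0:ℝ) ≤ Real.cosh y ^ 2 * Real.cosh (l*y)), one_mul,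
    add_mul, Real.exp_add]
  have h1 : Real.cosh y ^ 2 ≤ Real.exp (2 * y) := by
    have := cosh_le_exp hy
    have h2 : Real.exp (2*y) = Real.exp y * Real.exp y := by rw [← Real.exp_add]; ring_nf
    nlinarith [Real.cosh_pos y]
  exact mul_le_mul h1 (cosh_mul_le l hy) (Real.cosh_pos _).le (Real.exp_pos _).le

lemma hasDerivAt_besselK (l : ℝ) {z : ℝ} (hz : 0 < z) :
    HasDerivAt (besselK l) (besselKd l z) z := by
  have key := hasDerivAt_integral_of_dominated_loc_of_deriv_le
    (μ := volume.restrict (Set.Ioi (0:ℝ))) (x₀ := z) (s := Metric.ball z (z/2))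
    (F := fun x y => Real.exp (-x * Real.cosh y) * Real.cosh (l * y))
    (F' := fun x y => -(Real.exp (-x * Real.cosh y) * (Real.cosh y * Real.cosh (l * y))))
    (bound := fun y => Real.exp (-(z/2) * Real.cosh y) * (Real.cosh y * Real.cosh (l * y)))
    (Metric.ball_mem_nhds _ (by positivity))
    (Filter.Eventually.of_forall fun x => (Continuous.aestronglyMeasurable (by continuity)))
    (integrable0 l hz)
    (Continuous.aestronglyMeasurable (by continuity))
    ?_ ((integrable1 l (by positivity : (0:ℝ) < z/2)))
    ?_
  · exact key.2
  · refine Filter.Eventually.of_forall fun y => fun x hx => ?_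
    have hx2 : z/2 ≤ x := by
      rw [Metric.mem_ball, Real.dist_eq] at hx
      cases abs_lt.1 hx; linarith
    rw [norm_neg, Real.norm_eq_abs, abs_of_nonneg (by positivity)]
    apply mul_le_mul_of_nonneg_right _ (by positivity)
    apply Real.exp_le_exp.2
    nlinarith [Real.cosh_pos y]
  · refine Filter.Eventually.of_forall fun y => fun x hx => ?_
    have h1 : HasDerivAt (fun x : ℝ => -x * Real.cosh y) (-1 * Real.cosh y) x :=
      (hasDerivAt_id x).neg.mul_const _
    have h2 := (h1.exp).mul_const (Real.cosh (l * y))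
    refine h2.congr_deriv ?_
    ring

lemma hasDerivAt_besselKd (l : ℝ) {z : ℝ} (hz : 0 < z) :
    HasDerivAt (besselKd l) (besselKdd l z) z := by
  have key := hasDerivAt_integral_of_dominated_loc_of_deriv_le
    (μ := volume.restrict (Set.Ioi (0:ℝ))) (x₀ := z) (s := Metric.ball z (z/2))
    (F := fun x y => -(Real.exp (-x * Real.cosh y) * (Real.cosh y * Real.cosh (l * y))))
    (F' := fun x y => Real.exp (-x * Real.cosh y) * (Real.cosh y ^ 2 * Real.cosh (l * y)))
    (bound := fun y => Real.exp (-(z/2) * Real.cosh y) * (Real.cosh y ^ 2 * Real.cosh (l * y)))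
    (Metric.ball_mem_nhds _ (by positivity))
    (Filter.Eventually.of_forall fun x => (Continuous.aestronglyMeasurable (by continuity)))
    ((integrable1 l hz).neg)
    (Continuous.aestronglyMeasurable (by continuity))
    ?_ ((integrable2 l (by positivity : (0:ℝ) < z/2)))
    ?_
  · exact key.2
  · refine Filter.Eventually.of_forall fun y => fun x hx => ?_
    have hx2 : z/2 ≤ x := by
      rw [Metric.mem_ball, Real.dist_eq] at hx
      cases abs_lt.1 hx; linarith
    rw [Real.norm_eq_abs, abs_of_nonneg (by positivity)]
    apply mul_le_mul_of_nonneg_right _ (by positivity)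
    apply Real.exp_le_exp.2
    nlinarith [Real.cosh_pos y]
  · refine Filter.Eventually.of_forall fun y => fun x hx => ?_
    have h1 : HasDerivAt (fun x : ℝ => -x * Real.cosh y) (-1 * Real.cosh y) x :=
      (hasDerivAt_id x).neg.mul_const _
    have h2 := ((h1.exp).mul_const (Real.cosh y * Real.cosh (l * y))).neg
    refine h2.congr_deriv ?_
    ring

lemma tendsto_kernel_zero (z k C : ℝ) (hz : 0 < z) :
    Tendsto (fun y => C * Real.exp (k * y - z/2 * Real.exp y)) atTop (𝓝 0) := by
  have h1 : Tendsto (fun y => k * y - z/2 * Real.exp y) atTop atBot := by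
    apply tendsto_atBot_mono' atTop ?_ tendsto_neg_atTop_atBot
    filter_upwards [eventually_ge_atTop (max 1 (8*(k+1)/z))] with y hy
    have hy1 : (1:ℝ) ≤ y := le_trans (le_max_left _ _) hy
    have hy2 : 8*(k+1)/z ≤ y := le_trans (le_max_right _ _) hy
    have hy0 : (0:ℝ) ≤ y := by linarith
    have he : y^2/4 ≤ Real.exp y := exp_ge_quarter_sq hy0
    have hzz : z * (8*(k+1)/z) = 8*(k+1) := by field_simp
    have h8 : 8*(k+1) ≤ z * y := by
      calc 8*(k+1) = z * (8*(k+1)/z) := hzz.symm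
        _ ≤ z * y := by apply mul_le_mul_of_nonneg_left hy2 hz.le
    nlinarith [mul_le_mul_of_nonneg_left he hz.le, mul_le_mul_of_nonneg_right h8 hy0]
  have h2 := (Real.tendsto_exp_atBot.comp h1).const_mul C
  simpa using h2

set_option maxHeartbeats 1000000 in
lemma besselK_ode (l : ℝ) {z : ℝ} (hz : 0 < z) :
    z^2 * besselKdd l z + z * besselKd l z - (z^2 + l^2) * besselK l z = 0 := by
  set G : ℝ → ℝ := fun y =>
    Real.exp (-z * Real.cosh y) * (z * Real.sinh y * Real.cosh (l*y) + l * Real.sinh (l*y))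
    with hGdef
  set g : ℝ → ℝ := fun y =>
    Real.exp (-z * Real.cosh y) *
      ((-(z^2) * Real.sinh y ^ 2 + z * Real.cosh y + l^2) * Real.cosh (l*y)) with hgdef
  have hG : ∀ y : ℝ, HasDerivAt G (g y) y := by
    intro y
    have hly : HasDerivAt (fun y : ℝ => l * y) l y := by
      simpa using (hasDerivAt_id y).const_mul l
    have hcoshl : HasDerivAt (fun y : ℝ => Real.cosh (l*y)) (Real.sinh (l*y) * l) y :=
      (Real.hasDerivAt_cosh (l*y)).comp y hly
    have hsinhl : HasDerivAt (fun y : ℝ => Real.sinh (l*y)) (Real.cosh (l*y) * l) y :=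
      (Real.hasDerivAt_sinh (l*y)).comp y hly
    have hu : HasDerivAt (fun y : ℝ => Real.exp (-z * Real.cosh y))
        (Real.exp (-z * Real.cosh y) * (-z * Real.sinh y)) y :=
      (((Real.hasDerivAt_cosh y).const_mul (-z)).exp)
    have hv : HasDerivAt (fun y : ℝ => z * Real.sinh y * Real.cosh (l*y) + l * Real.sinh (l*y))
        ((z * Real.cosh y) * Real.cosh (l*y) + (z * Real.sinh y) * (Real.sinh (l*y) * l)
          + l * (Real.cosh (l*y) * l)) y :=
      ((((Real.hasDerivAt_sinh y).const_mul z).mul hcoshl)).add (hsinhl.const_mul l)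
    have := hu.mul hv
    refine this.congr_deriv ?_
    simp only [hgdef]
    ring
  have hg_int : IntegrableOn g (Set.Ioi 0) := by
    refine integrableOn_kernel z (2+|l|) (z^2 + z + l^2) hz (by continuity) fun y hy => ?_
    have h1 : |Real.sinh y| ≤ Real.exp y := by
      have := abs_sinh_le_exp_abs y; rwa [abs_of_nonneg hy] at this
    have h2 : Real.cosh y ≤ Real.exp y := cosh_le_exp hy
    have h3 : Real.cosh (l*y) ≤ Real.exp (|l| * y) := cosh_mul_le l hy
    have he1 : (1:ℝ) ≤ Real.exp y := by
      rw [show (1:ℝ) = Real.exp 0 by simp]; exact Real.exp_le_exp.2 hy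
    have hexp : Real.exp ((2+|l|)*y) = Real.exp y * Real.exp y * Real.exp (|l| * y) := by
      rw [← Real.exp_add, ← Real.exp_add]; ring_nf
    rw [abs_mul, abs_of_nonneg (Real.cosh_pos (l*y)).le, hexp]
    have habs : |(-(z^2) * Real.sinh y ^ 2 + z * Real.cosh y + l^2)|
        ≤ (z^2 + z + l^2) * (Real.exp y * Real.exp y) := by
      have hs2 : Real.sinh y ^ 2 ≤ Real.exp y * Real.exp y := by
        nlinarith [abs_nonneg (Real.sinh y), sq_abs (Real.sinh y)]
      apply abs_le.2
      constructor
      · nlinarith [Real.cosh_pos y, Real.exp_pos y, sq_nonneg (Real.sinh y), sq_nonneg z, sq_nonneg l]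
      · have hEy : Real.exp y ≤ Real.exp y * Real.exp y :=
          le_mul_of_one_le_right (Real.exp_pos y).le he1
        have hE1' : (1:ℝ) ≤ Real.exp y * Real.exp y := by nlinarith
        nlinarith [mul_nonneg (sq_nonneg z) (sq_nonneg (Real.sinh y)),
          mul_le_mul_of_nonneg_left (h2.trans hEy) hz.le,
          mul_le_mul_of_nonneg_left hE1' (sq_nonneg l)]
    calc |(-(z^2) * Real.sinh y ^ 2 + z * Real.cosh y + l^2)| * Real.cosh (l*y)
        ≤ ((z^2 + z + l^2) * (Real.exp y * Real.exp y)) * Real.exp (|l| * y) := by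
          apply mul_le_mul habs h3 (Real.cosh_pos _).le
          positivity
      _ = (z^2 + z + l^2) * (Real.exp y * Real.exp y * Real.exp (|l| * y)) := by ring
  have hGtend : Tendsto G atTop (𝓝 0) := by
    apply squeeze_zero_norm' ?_ (tendsto_kernel_zero z (1+|l|) (z + |l|) hz)
    filter_upwards [eventually_ge_atTop (0:ℝ)] with y hy
    have h1 : |Real.sinh y| ≤ Real.exp y := by
      have := abs_sinh_le_exp_abs y; rwa [abs_of_nonneg hy] at this
    have h3 : Real.cosh (l*y) ≤ Real.exp (|l| * y) := cosh_mul_le l hy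
    have h4 : |Real.sinh (l*y)| ≤ Real.exp (|l| * y) := by
      have := abs_sinh_le_exp_abs (l*y); rwa [abs_mul, abs_of_nonneg hy] at this
    have he1 : (1:ℝ) ≤ Real.exp y := by
      rw [show (1:ℝ) = Real.exp 0 by simp]; exact Real.exp_le_exp.2 hy
    have hee : Real.exp ((1+|l|)*y) = Real.exp y * Real.exp (|l| * y) := by
      rw [← Real.exp_add]; ring_nf
    have hexpb : Real.exp (-z * Real.cosh y) ≤ Real.exp (-(z/2 * Real.exp y)) := by
      apply Real.exp_le_exp.2
      nlinarith [cosh_ge_half_exp y]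
    have hvb : |z * Real.sinh y * Real.cosh (l*y) + l * Real.sinh (l*y)|
        ≤ (z + |l|) * Real.exp ((1+|l|)*y) := by
      rw [hee]
      calc |z * Real.sinh y * Real.cosh (l*y) + l * Real.sinh (l*y)|
          ≤ |z * Real.sinh y * Real.cosh (l*y)| + |l * Real.sinh (l*y)| := abs_add_le _ _
        _ = z * |Real.sinh y| * Real.cosh (l*y) + |l| * |Real.sinh (l*y)| := by
            rw [abs_mul, abs_mul, abs_mul, abs_of_nonneg hz.le,
              abs_of_nonneg (Real.cosh_pos (l*y)).le]
        _ ≤ z * Real.exp y * Real.exp (|l| * y) + |l| * (Real.exp y * Real.exp (|l| * y)) := by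
            have hb1 : z * |Real.sinh y| * Real.cosh (l*y) ≤ z * Real.exp y * Real.exp (|l| * y) := by
              apply mul_le_mul (mul_le_mul_of_nonneg_left h1 hz.le) h3
                (Real.cosh_pos _).le (by positivity)
            have hb2 : |l| * |Real.sinh (l*y)| ≤ |l| * (Real.exp y * Real.exp (|l| * y)) := by
              apply mul_le_mul_of_nonneg_left ?_ (abs_nonneg l)
              calc |Real.sinh (l*y)| ≤ Real.exp (|l| * y) := h4
                _ ≤ Real.exp y * Real.exp (|l| * y) := by nlinarith [Real.exp_pos (|l| * y)]
            linarith
        _ = (z + |l|) * (Real.exp y * Real.exp (|l| * y)) := by ring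
    rw [Real.norm_eq_abs, hGdef]
    calc |Real.exp (-z * Real.cosh y) * (z * Real.sinh y * Real.cosh (l*y) + l * Real.sinh (l*y))|
        = Real.exp (-z * Real.cosh y) * |z * Real.sinh y * Real.cosh (l*y) + l * Real.sinh (l*y)| := by
          rw [abs_mul, abs_of_nonneg (Real.exp_pos _).le]
      _ ≤ Real.exp (-(z/2 * Real.exp y)) * ((z + |l|) * Real.exp ((1+|l|)*y)) :=
          mul_le_mul hexpb hvb (abs_nonneg _) (Real.exp_pos _).le
      _ = (z + |l|) * Real.exp ((1+|l|)*y - z/2 * Real.exp y) := by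
          rw [mul_comm, mul_assoc, ← Real.exp_add, ← sub_eq_add_neg]
  have hG0 : G 0 = 0 := by simp [hGdef]
  have hFTC : ∫ y in Set.Ioi (0:ℝ), g y = 0 - G 0 := by
    apply integral_Ioi_of_hasDerivAt_of_tendsto
      ((Continuous.continuousWithinAt (by continuity))) (fun x _ => hG x) hg_int hGtend
  rw [hG0, sub_zero] at hFTC
  -- split the integral
  have hsplit : ∀ y : ℝ, g y =
      (-(z^2)) * (Real.exp (-z * Real.cosh y) * (Real.cosh y ^ 2 * Real.cosh (l*y)))
      + ((z^2 + l^2) * (Real.exp (-z * Real.cosh y) * Real.cosh (l*y))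
        + z * (Real.exp (-z * Real.cosh y) * (Real.cosh y * Real.cosh (l*y)))) := by
    intro y
    have hs : Real.sinh y ^ 2 = Real.cosh y ^ 2 - 1 := by
      have := Real.cosh_sq_sub_sinh_sq y; linarith
    simp only [hgdef]
    rw [hs]; ring
  have hI : ∫ y in Set.Ioi (0:ℝ), g y =
      (-(z^2)) * besselKdd l z + ((z^2 + l^2) * besselK l z
        + z * ∫ y in Set.Ioi (0:ℝ),
            Real.exp (-z * Real.cosh y) * (Real.cosh y * Real.cosh (l*y))) := by
    simp only [hsplit]
    have ha : Integrable (fun y => -z^2 * (Real.exp (-z * Real.cosh y) *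
        (Real.cosh y ^ 2 * Real.cosh (l * y)))) (volume.restrict (Set.Ioi 0)) :=
      (integrable2 l hz).const_mul (-z^2)
    have hb1 : Integrable (fun y => (z^2+l^2) * (Real.exp (-z * Real.cosh y) *
        Real.cosh (l * y))) (volume.restrict (Set.Ioi 0)) :=
      (integrable0 l hz).const_mul (z^2+l^2)
    have hb2 : Integrable (fun y => z * (Real.exp (-z * Real.cosh y) *
        (Real.cosh y * Real.cosh (l * y)))) (volume.restrict (Set.Ioi 0)) :=
      (integrable1 l hz).const_mul z
    have hb : Integrable (fun y => (z^2+l^2) * (Real.exp (-z * Real.cosh y) * Real.cosh (l * y))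
        + z * (Real.exp (-z * Real.cosh y) * (Real.cosh y * Real.cosh (l * y))))
        (volume.restrict (Set.Ioi 0)) := hb1.add hb2
    rw [integral_add ha hb, integral_add hb1 hb2,
      integral_const_mul, integral_const_mul, integral_const_mul]
    rfl
  have hKd : besselKd l z
      = -∫ y in Set.Ioi (0:ℝ), Real.exp (-z * Real.cosh y) * (Real.cosh y * Real.cosh (l*y)) := by
    rw [besselKd, integral_neg]
  rw [hFTC] at hI
  have hzI : z * (∫ y in Set.Ioi (0:ℝ),
      Real.exp (-z * Real.cosh y) * (Real.cosh y * Real.cosh (l * y)))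
      = -(z * besselKd l z) := by
    rw [hKd]; ring
  linarith [hI, hzI]

theorem stmt_13 (m : ℝ) (hm : 0 ≤ m) :
    let lam : ℝ → ℝ := fun t =>
      (1 / (m + 1)) ^ (1 / (2 * (m + 1))) * t ^ ((1 : ℝ) / 2) *
        besselK (1 / (2 * (m + 1))) (t ^ (m + 1) / (m + 1))
    ∀ t : ℝ, 1 ≤ t → deriv (deriv lam) t - t ^ (2 * m) * lam t = 0 := by
  intro lam t ht
  have hm1 : (0:ℝ) < m + 1 := by linarith
  have hne : m + 1 ≠ 0 := hm1.ne'
  have ht0 : (0:ℝ) < t := by linarith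
  set c : ℝ := (1 / (m + 1)) ^ (1 / (2 * (m + 1))) with hc
  set l : ℝ := 1 / (2 * (m + 1)) with hl
  have hz_pos : ∀ s : ℝ, 0 < s → 0 < s ^ (m+1) / (m+1) :=
    fun s hs => div_pos (Real.rpow_pos_of_pos hs _) hm1
  have hz_deriv : ∀ s : ℝ, 0 < s →
      HasDerivAt (fun u : ℝ => u ^ (m+1) / (m+1)) (s ^ m) s := by
    intro s hs
    have h := (Real.hasDerivAt_rpow_const (x := s) (p := m+1) (Or.inl hs.ne')).div_const (m+1)
    exact h.congr_deriv (by rw [show m + 1 - 1 = m by ring]; field_simp)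
  have hK : ∀ s : ℝ, 0 < s → HasDerivAt (fun u : ℝ => besselK l (u ^ (m+1) / (m+1)))
      (besselKd l (s ^ (m+1) / (m+1)) * s ^ m) s :=
    fun s hs => by have := (hasDerivAt_besselK l (hz_pos s hs)).comp s (hz_deriv s hs); exact this
  have hKd : ∀ s : ℝ, 0 < s → HasDerivAt (fun u : ℝ => besselKd l (u ^ (m+1) / (m+1)))
      (besselKdd l (s ^ (m+1) / (m+1)) * s ^ m) s :=
    fun s hs => by have := (hasDerivAt_besselKd l (hz_pos s hs)).comp s (hz_deriv s hs); exact this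
  set lam1 : ℝ → ℝ := fun s => c * ((1/2) * s ^ (-(1:ℝ)/2) * besselK l (s ^ (m+1) / (m+1))
      + s ^ ((1:ℝ)/2 + m) * besselKd l (s ^ (m+1) / (m+1))) with hlam1
  set lam2 : ℝ → ℝ := fun s => c * (-(1/4) * s ^ (-(3:ℝ)/2) * besselK l (s ^ (m+1) / (m+1))
      + (m+1) * s ^ (m - (1:ℝ)/2) * besselKd l (s ^ (m+1) / (m+1))
      + s ^ (2*m + (1:ℝ)/2) * besselKdd l (s ^ (m+1) / (m+1))) with hlam2
  have hA : ∀ s : ℝ, 0 < s → HasDerivAt lam (lam1 s) s := by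
    intro s hs
    have h1 : HasDerivAt (fun u : ℝ => c * u ^ ((1:ℝ)/2))
        (c * ((1:ℝ)/2 * s ^ ((1:ℝ)/2 - 1))) s :=
      (Real.hasDerivAt_rpow_const (x := s) (p := (1:ℝ)/2) (Or.inl hs.ne')).const_mul c
    have h2 := h1.mul (hK s hs)
    have heq : lam1 s = c * ((1:ℝ)/2 * s ^ ((1:ℝ)/2 - 1)) * besselK l (s ^ (m+1) / (m+1))
        + c * s ^ ((1:ℝ)/2) * (besselKd l (s ^ (m+1) / (m+1)) * s ^ m) := by
      simp only [hlam1]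
      have e1 : s ^ ((1:ℝ)/2 + m) = s ^ ((1:ℝ)/2) * s ^ m := Real.rpow_add hs _ _
      have e2 : s ^ ((1:ℝ)/2 - 1) = s ^ (-(1:ℝ)/2) := by norm_num
      rw [e1, e2]; ring
    rw [heq]
    exact h2
  have hB : ∀ s : ℝ, 0 < s → HasDerivAt lam1 (lam2 s) s := by
    intro s hs
    have hr1 : HasDerivAt (fun u : ℝ => (1/2 : ℝ) * u ^ (-(1:ℝ)/2))
        ((1/2 : ℝ) * (-(1:ℝ)/2 * s ^ (-(1:ℝ)/2 - 1))) s :=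
      (Real.hasDerivAt_rpow_const (x := s) (p := -(1:ℝ)/2) (Or.inl hs.ne')).const_mul _
    have hr2 : HasDerivAt (fun u : ℝ => u ^ ((1:ℝ)/2 + m))
        (((1:ℝ)/2 + m) * s ^ ((1:ℝ)/2 + m - 1)) s :=
      Real.hasDerivAt_rpow_const (x := s) (p := (1:ℝ)/2 + m) (Or.inl hs.ne')
    have p1 := hr1.mul (hK s hs)
    have p2 := hr2.mul (hKd s hs)
    have psum := (p1.add p2).const_mul c
    have heq : lam2 s = c * ((1/2 : ℝ) * (-(1:ℝ)/2 * s ^ (-(1:ℝ)/2 - 1))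
          * besselK l (s ^ (m+1) / (m+1))
        + (1/2 : ℝ) * s ^ (-(1:ℝ)/2) * (besselKd l (s ^ (m+1) / (m+1)) * s ^ m)
        + (((1:ℝ)/2 + m) * s ^ ((1:ℝ)/2 + m - 1) * besselKd l (s ^ (m+1) / (m+1))
          + s ^ ((1:ℝ)/2 + m) * (besselKdd l (s ^ (m+1) / (m+1)) * s ^ m))) := by
      simp only [hlam2]
      have e1 : s ^ (-(1:ℝ)/2 - 1) = s ^ (-(3:ℝ)/2) := by norm_num
      have e2 : s ^ (m - (1:ℝ)/2) = s ^ (-(1:ℝ)/2) * s ^ m := by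
        rw [show m - (1:ℝ)/2 = -(1:ℝ)/2 + m by ring, Real.rpow_add hs]
      have e3 : s ^ ((1:ℝ)/2 + m - 1) = s ^ (-(1:ℝ)/2) * s ^ m := by
        rw [show (1:ℝ)/2 + m - 1 = -(1:ℝ)/2 + m by ring, Real.rpow_add hs]
      have e4 : s ^ (2*m + (1:ℝ)/2) = s ^ ((1:ℝ)/2 + m) * s ^ m := by
        rw [show 2*m + (1:ℝ)/2 = ((1:ℝ)/2 + m) + m by ring, Real.rpow_add hs]
      rw [e1, e2, e3, e4]; ring
    rw [heq]
    exact psum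
  have hev : deriv lam =ᶠ[𝓝 t] lam1 := by
    filter_upwards [Ioi_mem_nhds ht0] with s hs
    exact (hA s hs).deriv
  have hstep : deriv (deriv lam) t = lam2 t := by
    rw [hev.deriv_eq, (hB t ht0).deriv]
  rw [hstep]
  have h := besselK_ode (1/(2*(m+1))) (hz_pos t ht0)
  have hode : t^(m+1) * t^(m+1) * besselKdd (1/(2*(m+1))) (t ^ (m+1) / (m+1))
      + (m+1) * t^(m+1) * besselKd (1/(2*(m+1))) (t ^ (m+1) / (m+1))
      - (t^(m+1) * t^(m+1) + 1/4) * besselK (1/(2*(m+1))) (t ^ (m+1) / (m+1)) = 0 := by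
    field_simp at h
    have h4 : (4*(m+1)^5) * (t^(m+1) * t^(m+1) * besselKdd (1/(2*(m+1))) (t ^ (m+1) / (m+1))
        + (m+1) * t^(m+1) * besselKd (1/(2*(m+1))) (t ^ (m+1) / (m+1))
        - (t^(m+1) * t^(m+1) + 1/4) * besselK (1/(2*(m+1))) (t ^ (m+1) / (m+1))) = 0 := by
      rw [show (m + 1) * 2 = 2 * (m + 1) by ring] at h
      linear_combination (m + 1) ^ 5 * h
    exact (mul_eq_zero.1 h4).resolve_left (by positivity)
  have e1 : t ^ (2*m + (1:ℝ)/2) = t^(m+1) * t^(m+1) * t^(-(3:ℝ)/2) := by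
    rw [show 2*m + (1:ℝ)/2 = (m+1) + ((m+1) + (-(3:ℝ)/2)) by ring,
      Real.rpow_add ht0 (m+1) ((m+1) + (-(3:ℝ)/2)), Real.rpow_add ht0 (m+1) (-(3:ℝ)/2),
      ← mul_assoc]
  have e2 : t ^ (m - (1:ℝ)/2) = t^(m+1) * t^(-(3:ℝ)/2) := by
    rw [show m - (1:ℝ)/2 = (m+1) + (-(3:ℝ)/2) by ring, Real.rpow_add ht0 (m+1) (-(3:ℝ)/2)]
  have e3 : t ^ (2*m) * t ^ ((1:ℝ)/2) = t^(m+1) * t^(m+1) * t^(-(3:ℝ)/2) :=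
    (Real.rpow_add ht0 (2*m) ((1:ℝ)/2)).symm.trans e1
  show c * (-(1/4) * t ^ (-(3:ℝ)/2) * besselK (1/(2*(m+1))) (t ^ (m+1) / (m+1))
      + (m+1) * t ^ (m - (1:ℝ)/2) * besselKd (1/(2*(m+1))) (t ^ (m+1) / (m+1))
      + t ^ (2*m + (1:ℝ)/2) * besselKdd (1/(2*(m+1))) (t ^ (m+1) / (m+1)))
      - t ^ (2*m) * (c * t ^ ((1:ℝ)/2) * besselK (1/(2*(m+1))) (t ^ (m+1) / (m+1))) = 0
  rw [e1, e2]
  linear_combination (c * t ^ (-(3:ℝ)/2)) * hode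
    - (c * besselK (1/(2*(m+1))) (t ^ (m+1) / (m+1))) * e3
end

section
/- Let m ≥ 0, n ≥ 1, and let δ = 1. If n ≥ 3, then for all μ ≥ 0 the Strauss-type exponent p_S(n + μ/(m+1), m) is strictly greater than the Fujita exponent p_F((m+1)n + (μ-2)/2) = 1 + 2/((m+1)n + μ/2 - 1). Equivalently, [(m+1)n - 2(m+1) - 1]μ² + [2(m+1)³n² + (m+1)²n² - 6(m+1)²n - 2(m+1)n + 6(m+1) - 1]μ + 2(m+1)³n³ - 4(m+1)³n² - 2(m+1)²n² + 8(m+1)²n - 2(m+1)n - 4(m+1) + 2 > 0. -/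
theorem stmt_15 (m : ℝ) (n : ℕ) (hm : 0 ≤ m) (hn : 3 ≤ n) :
    ∀ μ : ℝ, 0 ≤ μ →
      (((m + 1) * ((n : ℝ) - 2) + μ + 3 +
          Real.sqrt (((m + 1) * ((n : ℝ) - 2) + μ + 3) ^ 2 +
            8 * (m + 1) * ((m + 1) * n + μ - 1))) / (2 * ((m + 1) * n + μ - 1)) >
        1 + 2 / ((m + 1) * n + μ / 2 - 1)) ∧
      (0 < ((m + 1) * (n : ℝ) - 2 * (m + 1) - 1) * μ ^ 2 +
        (2 * (m + 1) ^ 3 * (n : ℝ) ^ 2 + (m + 1) ^ 2 * n ^ 2 - 6 * (m + 1) ^ 2 * n -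
          2 * (m + 1) * n + 6 * (m + 1) - 1) * μ +
        2 * (m + 1) ^ 3 * (n : ℝ) ^ 3 - 4 * (m + 1) ^ 3 * n ^ 2 - 2 * (m + 1) ^ 2 * n ^ 2 +
          8 * (m + 1) ^ 2 * n - 2 * (m + 1) * n - 4 * (m + 1) + 2) := by
  intro μ hμ
  have hN : (3 : ℝ) ≤ (n : ℝ) := by exact_mod_cast hn
  have hM : (1 : ℝ) ≤ m + 1 := by linarith
  set N : ℝ := (n : ℝ) with hNdef
  -- abbreviations
  set A : ℝ := (m + 1) * N + μ - 1 with hAdef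
  set B : ℝ := (m + 1) * (N - 2) + μ + 3 with hBdef
  set E : ℝ := (m + 1) * N + μ / 2 - 1 with hEdef
  have hMN : (3 : ℝ) ≤ (m + 1) * N := by nlinarith
  have hA : 0 < A := by simp only [hAdef]; linarith
  have hE : 0 < E := by simp only [hEdef]; linarith
  have hB : 0 < B := by simp only [hBdef]; nlinarith
  constructor
  · -- first part
    set q : ℝ := 1 + 2 / E with hqdef
    have hq : q = (E + 2) / E := by
      rw [hqdef]; field_simp
    have hW : A * (E + 2) ^ 2 - B * (E + 2) * E - 2 * (m + 1) * E ^ 2 < 0 := by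
      simp only [hAdef, hBdef, hEdef]
      nlinarith [mul_nonneg hm hμ, mul_nonneg hm (sub_nonneg.mpr hN),
        mul_nonneg hμ (sub_nonneg.mpr hN), sq_nonneg μ, sq_nonneg (m * μ),
        mul_nonneg (mul_nonneg hm hm) (sub_nonneg.mpr hN),
        mul_nonneg (mul_nonneg hm hμ) (sub_nonneg.mpr hN),
        mul_nonneg (mul_nonneg hμ hμ) (sub_nonneg.mpr hN),
        mul_nonneg (mul_nonneg (mul_nonneg hm hm) hm) (sub_nonneg.mpr hN)]
    have hQ : A * q ^ 2 - B * q - 2 * (m + 1) < 0 := by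
      have hE' : E ≠ 0 := ne_of_gt hE
      have : A * q ^ 2 - B * q - 2 * (m + 1) =
          (A * (E + 2) ^ 2 - B * (E + 2) * E - 2 * (m + 1) * E ^ 2) / E ^ 2 := by
        rw [hq]; field_simp
      rw [this]
      exact div_neg_of_neg_of_pos hW (by positivity)
    have hS : 0 < B ^ 2 + 8 * (m + 1) * A := by positivity
    have hkey : (q * (2 * A) - B) ^ 2 < B ^ 2 + 8 * (m + 1) * A := by nlinarith
    have hsqrt : q * (2 * A) - B < Real.sqrt (B ^ 2 + 8 * (m + 1) * A) := by
      rcases le_or_gt (q * (2 * A) - B) 0 with h | h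
      · calc q * (2 * A) - B ≤ 0 := h
          _ < Real.sqrt (B ^ 2 + 8 * (m + 1) * A) := Real.sqrt_pos.mpr hS
      · exact (Real.lt_sqrt h.le).mpr hkey
    rw [gt_iff_lt, lt_div_iff₀ (by positivity : (0:ℝ) < 2 * A)]
    linarith
  · -- second part: polynomial positivity
    set k : ℝ := N - 3 with hkdef
    have hk : 0 ≤ k := by simp only [hkdef]; linarith
    have hN3 : N = 3 + k := by simp only [hkdef]; ring
    rw [hN3]
    linarith [mul_nonneg (mul_nonneg (pow_nonneg hm 0) (pow_nonneg hk 0)) (pow_nonneg hμ 1),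
      mul_nonneg (mul_nonneg (pow_nonneg hm 0) (pow_nonneg hk 1)) (pow_nonneg hμ 0),
      mul_nonneg (mul_nonneg (pow_nonneg hm 0) (pow_nonneg hk 1)) (pow_nonneg hμ 1),
      mul_nonneg (mul_nonneg (pow_nonneg hm 0) (pow_nonneg hk 1)) (pow_nonneg hμ 2),
      mul_nonneg (mul_nonneg (pow_nonneg hm 0) (pow_nonneg hk 2)) (pow_nonneg hμ 0),
      mul_nonneg (mul_nonneg (pow_nonneg hm 0) (pow_nonneg hk 2)) (pow_nonneg hμ 1),
      mul_nonneg (mul_nonneg (pow_nonneg hm 0) (pow_nonneg hk 3)) (pow_nonneg hμ 0),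
      mul_nonneg (mul_nonneg (pow_nonneg hm 1) (pow_nonneg hk 0)) (pow_nonneg hμ 0),
      mul_nonneg (mul_nonneg (pow_nonneg hm 1) (pow_nonneg hk 0)) (pow_nonneg hμ 1),
      mul_nonneg (mul_nonneg (pow_nonneg hm 1) (pow_nonneg hk 0)) (pow_nonneg hμ 2),
      mul_nonneg (mul_nonneg (pow_nonneg hm 1) (pow_nonneg hk 1)) (pow_nonneg hμ 0),
      mul_nonneg (mul_nonneg (pow_nonneg hm 1) (pow_nonneg hk 1)) (pow_nonneg hμ 1),
      mul_nonneg (mul_nonneg (pow_nonneg hm 1) (pow_nonneg hk 1)) (pow_nonneg hμ 2),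
      mul_nonneg (mul_nonneg (pow_nonneg hm 1) (pow_nonneg hk 2)) (pow_nonneg hμ 0),
      mul_nonneg (mul_nonneg (pow_nonneg hm 1) (pow_nonneg hk 2)) (pow_nonneg hμ 1),
      mul_nonneg (mul_nonneg (pow_nonneg hm 1) (pow_nonneg hk 3)) (pow_nonneg hμ 0),
      mul_nonneg (mul_nonneg (pow_nonneg hm 2) (pow_nonneg hk 0)) (pow_nonneg hμ 0),
      mul_nonneg (mul_nonneg (pow_nonneg hm 2) (pow_nonneg hk 0)) (pow_nonneg hμ 1),
      mul_nonneg (mul_nonneg (pow_nonneg hm 2) (pow_nonneg hk 1)) (pow_nonneg hμ 0),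
      mul_nonneg (mul_nonneg (pow_nonneg hm 2) (pow_nonneg hk 1)) (pow_nonneg hμ 1),
      mul_nonneg (mul_nonneg (pow_nonneg hm 2) (pow_nonneg hk 2)) (pow_nonneg hμ 0),
      mul_nonneg (mul_nonneg (pow_nonneg hm 2) (pow_nonneg hk 2)) (pow_nonneg hμ 1),
      mul_nonneg (mul_nonneg (pow_nonneg hm 2) (pow_nonneg hk 3)) (pow_nonneg hμ 0),
      mul_nonneg (mul_nonneg (pow_nonneg hm 3) (pow_nonneg hk 0)) (pow_nonneg hμ 0),
      mul_nonneg (mul_nonneg (pow_nonneg hm 3) (pow_nonneg hk 0)) (pow_nonneg hμ 1),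
      mul_nonneg (mul_nonneg (pow_nonneg hm 3) (pow_nonneg hk 1)) (pow_nonneg hμ 0),
      mul_nonneg (mul_nonneg (pow_nonneg hm 3) (pow_nonneg hk 1)) (pow_nonneg hμ 1),
      mul_nonneg (mul_nonneg (pow_nonneg hm 3) (pow_nonneg hk 2)) (pow_nonneg hμ 0),
      mul_nonneg (mul_nonneg (pow_nonneg hm 3) (pow_nonneg hk 2)) (pow_nonneg hμ 1),
      mul_nonneg (mul_nonneg (pow_nonneg hm 3) (pow_nonneg hk 3)) (pow_nonneg hμ 0)]
end

section
/- Let m ≥ 0, n ≥ 1, μ ≥ 0, p > 1 and set q = μ(p-1)/2 + (m+1)n(p-1). Suppose F ∈ C²([1,T)) is nonnegative with F(t) ≥ C(t+M) for some C, M > 0 and all t in [T₀, T), and F''(t) ≥ K(t+M)^{-q}F(t)^p for t ≥ T₀. If (p-1)·1 = q - 2 (i.e., p = 1 + 2/((m+1)n + μ/2 - 1)) and C is sufficiently large, then T < ∞. -/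
open Real Set

lemma mono_aux (φ φ' : ℝ → ℝ) (a b : ℝ) (hab : a ≤ b)
    (h : ∀ t ∈ Icc a b, HasDerivAt φ (φ' t) t)
    (h0 : ∀ t ∈ Icc a b, 0 ≤ φ' t) : φ a ≤ φ b := by
  have hmono := monotoneOn_of_deriv_nonneg (convex_Icc a b)
    (fun t ht => (h t ht).continuousAt.continuousWithinAt)
    (fun t ht => ((h t (interior_subset ht)).differentiableAt).differentiableWithinAt)
    (fun t ht => by rw [(h t (interior_subset ht)).deriv]; exact h0 t (interior_subset ht))
  exact hmono (left_mem_Icc.2 hab) (right_mem_Icc.2 hab) hab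

lemma key1 (g g' : ℝ → ℝ) (a b mm : ℝ) (hab : a ≤ b)
    (hg : ∀ t ∈ Icc a b, HasDerivAt g (g' t) t)
    (hm : ∀ t ∈ Icc a b, mm ≤ g' t) : g a + mm * (b - a) ≤ g b := by
  have := mono_aux (fun t => g t - mm * t) (fun t => g' t - mm) a b hab
    (fun t ht => (hg t ht).sub (by simpa using (hasDerivAt_id t).const_mul mm))
    (fun t ht => sub_nonneg.2 (hm t ht))
  nlinarith [this]

lemma key2 (g g' : ℝ → ℝ) (a b mm : ℝ) (hab : a ≤ b)
    (hg : ∀ t ∈ Icc a b, HasDerivAt g (g' t) t)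
    (hm : ∀ t ∈ Icc a b, mm * (t - a) ≤ g' t) :
    g a + mm * (b - a) ^ 2 / 2 ≤ g b := by
  have := mono_aux (fun t => g t - mm * (t - a) ^ 2 / 2) (fun t => g' t - mm * (t - a)) a b hab
    (fun t ht => by
      have h1 : HasDerivAt (fun t => mm * (t - a) ^ 2 / 2) (mm * (t - a)) t := by
        have := (((hasDerivAt_id t).sub_const a).pow 2).const_mul (mm / 2)
        convert this using 1
        · rfl
        · rfl
        · ext x; simp only [id_eq, Pi.pow_apply]; ring
        · simp only [id_eq, Nat.cast_ofNat, pow_one]; ring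
      exact (hg t ht).sub h1)
    (fun t ht => sub_nonneg.2 (hm t ht))
  nlinarith [this]

set_option maxHeartbeats 2000000 in
theorem stmt_18 (m μ p q : ℝ) (n : ℕ) (hm : 0 ≤ m) (hn : 1 ≤ n) (hμ : 0 ≤ μ) (hp : 1 < p)
    (hq : q = μ * (p - 1) / 2 + (m + 1) * n * (p - 1))
    (hcompat : (p - 1) * 1 = q - 2) (K : ℝ) (hK : 0 < K) :
    ∃ c₀ : ℝ, 0 < c₀ ∧
      ∀ (F : ℝ → ℝ) (C M T₀ : ℝ), 0 < C → 0 < M → 1 ≤ T₀ → c₀ ≤ C →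
        ContDiffOn ℝ 2 F (Ici 1) →
        (∀ t ∈ Ici (1 : ℝ), 0 ≤ F t) →
        (∀ t ∈ Ici T₀, C * (t + M) ≤ F t) →
        (∀ t ∈ Ici T₀, K * (t + M) ^ (-q) * F t ^ p ≤ deriv (deriv F) t) →
        False := by
  have hp1 : (0:ℝ) < p - 1 := by linarith
  have hq2 : q = p + 1 := by linarith
  have hq0 : (0:ℝ) < q := by linarith
  set ρ : ℝ := (8:ℝ) ^ (1 / (p - 1)) with hρdef
  have hρ1 : 1 < ρ := by
    rw [hρdef]
    apply Real.one_lt_rpow_iff_of_pos (by norm_num) |>.2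
    left; constructor
    · norm_num
    · positivity
  have hρ0 : (0:ℝ) < ρ := by linarith
  set Y : ℝ := 8 * 2 ^ q * ρ / K with hYdef
  have hY0 : 0 < Y := by
    have : (0:ℝ) < (2:ℝ) ^ q := Real.rpow_pos_of_pos (by norm_num) q
    positivity
  clear_value ρ Y
  refine ⟨Y ^ (1 / (p - 1)), Real.rpow_pos_of_pos hY0 _, ?_⟩
  intro F C M T₀ hC hM hT₀ hCc₀ hF hFnn hFl hFd
  -- C ^ (p-1) ≥ Y
  have hc₀pow : (Y ^ (1 / (p - 1))) ^ (p - 1) = Y := by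
    rw [← Real.rpow_mul hY0.le, one_div_mul_cancel (by linarith : p - 1 ≠ 0), Real.rpow_one]
  have hCpow : Y ≤ C ^ (p - 1) := by
    rw [← hc₀pow]
    exact Real.rpow_le_rpow (Real.rpow_pos_of_pos hY0 _).le hCc₀ hp1.le
  -- derivative infrastructure
  have hop : IsOpen (Ioi (1:ℝ)) := isOpen_Ioi
  have hF2 : ContDiffOn ℝ 2 F (Ioi 1) := hF.mono Ioi_subset_Ici_self
  have hd1 : ∀ t ∈ Ioi (1:ℝ), HasDerivAt F (deriv F t) t := by
    intro t ht
    exact ((hF2.differentiableOn (by norm_num)).differentiableAt (hop.mem_nhds ht)).hasDerivAt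
  have hF2' : ContDiffOn ℝ 1 (deriv F) (Ioi 1) := by
    exact hF2.deriv_of_isOpen hop (m := 1) (by norm_num)
  have hd2 : ∀ t ∈ Ioi (1:ℝ), HasDerivAt (deriv F) (deriv (deriv F) t) t := by
    intro t ht
    exact ((hF2'.differentiableOn (by norm_num)).differentiableAt (hop.mem_nhds ht)).hasDerivAt
  -- basic positivity
  have hT₀M : (0:ℝ) < T₀ + M := by linarith
  have hFpos : ∀ t, T₀ ≤ t → 0 < F t := by
    intro t ht
    have h1 := hFl t ht
    have h2 : 0 < t + M := by linarith
    have := mul_pos hC h2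
    linarith
  -- lower bound for second derivative on [T₀, ∞)
  have hdd : ∀ t, T₀ ≤ t → K * C ^ p * (t + M)⁻¹ ≤ deriv (deriv F) t := by
    intro t ht
    have htM : (0:ℝ) < t + M := by linarith
    have h1 : C * (t + M) ≤ F t := hFl t ht
    have h2 : (C * (t + M)) ^ p ≤ F t ^ p :=
      Real.rpow_le_rpow (by positivity) h1 (by linarith)
    have h3 : K * (t + M) ^ (-q) * (C * (t + M)) ^ p ≤ K * (t + M) ^ (-q) * F t ^ p := by
      have hx : (0:ℝ) < (t + M) ^ (-q) := Real.rpow_pos_of_pos htM _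
      exact mul_le_mul_of_nonneg_left h2 (by positivity)
    have h4 : K * (t + M) ^ (-q) * (C * (t + M)) ^ p = K * C ^ p * (t + M)⁻¹ := by
      rw [Real.mul_rpow hC.le htM.le]
      rw [show K * (t + M) ^ (-q) * (C ^ p * (t + M) ^ p)
          = K * C ^ p * ((t + M) ^ (-q) * (t + M) ^ p) by ring]
      rw [← Real.rpow_add htM]
      rw [show -q + p = -1 by linarith]
      rw [Real.rpow_neg_one]
    calc K * C ^ p * (t + M)⁻¹ = K * (t + M) ^ (-q) * (C * (t + M)) ^ p := h4.symm
      _ ≤ K * (t + M) ^ (-q) * F t ^ p := h3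
      _ ≤ deriv (deriv F) t := hFd t ht
  have hdd0 : ∀ t, T₀ ≤ t → 0 ≤ deriv (deriv F) t := by
    intro t ht
    have htM : (0:ℝ) < t + M := by linarith
    have : (0:ℝ) < K * C ^ p * (t + M)⁻¹ := by
      have : (0:ℝ) < C ^ p := Real.rpow_pos_of_pos hC _
      positivity
    linarith [hdd t ht]
  -- step 1 : find t₁ ≥ T₀ with 0 ≤ deriv F t₁
  set T₁ : ℝ := T₀ + 1 with hT₁def
  have hT₁1 : (1:ℝ) < T₁ := by simp only [hT₁def]; linarith
  have hKCp : (0:ℝ) < K * C ^ p := by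
    have : (0:ℝ) < C ^ p := Real.rpow_pos_of_pos hC _
    positivity
  clear_value T₁
  set A : ℝ := deriv F T₁ with hAdef
  set X : ℝ := (T₁ + M) * Real.exp ((1 + |A|) / (K * C ^ p)) with hXdef
  clear_value A X
  have hT₁M : (0:ℝ) < T₁ + M := by linarith
  have hexp1 : (1:ℝ) ≤ Real.exp ((1 + |A|) / (K * C ^ p)) := by
    rw [Real.one_le_exp_iff]
    positivity
  have hXT₁ : T₁ ≤ X := by
    have := le_mul_of_one_le_right hT₁M.le hexp1
    rw [hXdef]; linarith
  have hXpos : 0 < X := by linarith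
  have hcomp : ∀ t : ℝ, 0 < t + M →
      HasDerivAt (fun s => K * C ^ p * Real.log (s + M)) (K * C ^ p * (t + M)⁻¹) t := by
    intro t ht
    have h1 : HasDerivAt (fun s : ℝ => s + M) 1 t := (hasDerivAt_id t).add_const M
    have h2 := (Real.hasDerivAt_log (ne_of_gt ht)).comp t h1
    have h3 : HasDerivAt (fun s => Real.log (s + M)) ((t + M)⁻¹) t := by
      simpa [Function.comp_def] using h2
    simpa using h3.const_mul (K * C ^ p)
  have hmem : ∀ a b : ℝ, T₁ ≤ a → Icc a b ⊆ Ioi (1:ℝ) := by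
    intro a b ha t ht
    have := ht.1
    simp only [mem_Ioi]
    linarith
  have hstep1 : 0 ≤ deriv F X := by
    have hmain := mono_aux (fun t => deriv F t - K * C ^ p * Real.log (t + M))
      (fun t => deriv (deriv F) t - K * C ^ p * (t + M)⁻¹) T₁ X hXT₁
      (fun t ht => by
        have h1 : (1:ℝ) < t := lt_of_lt_of_le hT₁1 ht.1
        have h2 : (0:ℝ) < t + M := by linarith
        exact (hd2 t (by simp only [mem_Ioi]; linarith)).sub (hcomp t h2))
      (fun t ht => by
        have : T₀ ≤ t := by have := ht.1; simp only [hT₁def] at this ⊢; linarith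
        exact sub_nonneg.2 (hdd t this))
    have hlog : Real.log (T₁ + M) + (1 + |A|) / (K * C ^ p) ≤ Real.log (X + M) := by
      have h1 : Real.log X = Real.log (T₁ + M) + (1 + |A|) / (K * C ^ p) := by
        rw [hXdef, Real.log_mul (ne_of_gt hT₁M) (Real.exp_ne_zero _), Real.log_exp]
      have h2 : Real.log X ≤ Real.log (X + M) := by
        apply Real.log_le_log hXpos; linarith
      linarith
    have h5 : K * C ^ p * ((1 + |A|) / (K * C ^ p)) = 1 + |A| := by
      field_simp
    have h6 : K * C ^ p * (Real.log (T₁ + M) + (1 + |A|) / (K * C ^ p))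
        = K * C ^ p * Real.log (T₁ + M) + (1 + |A|) := by rw [mul_add, h5]
    have h7 := mul_le_mul_of_nonneg_left hlog hKCp.le
    linarith [neg_abs_le A]
  set t₁ : ℝ := X with ht₁def
  clear_value t₁
  have hT₀T₁ : T₀ ≤ T₁ := by rw [hT₁def]; linarith
  have ht₁T₀ : T₀ ≤ t₁ := le_trans hT₀T₁ hXT₁
  have ht₁1 : (1:ℝ) < t₁ := lt_of_lt_of_le hT₁1 hXT₁
  -- deriv F nonneg on [t₁, ∞)
  have hF'nn : ∀ b, t₁ ≤ b → 0 ≤ deriv F b := by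
    intro b hb
    have := key1 (deriv F) (deriv (deriv F)) t₁ b 0 hb
      (fun t ht => hd2 t (hmem t₁ b hXT₁ ht))
      (fun t ht => hdd0 t (le_trans ht₁T₀ ht.1))
    simp only [zero_mul, add_zero] at this
    linarith [hstep1]
  -- F monotone on [t₁, ∞)
  have hFmono : ∀ a b, t₁ ≤ a → a ≤ b → F a ≤ F b := by
    intro a b ha hab
    refine mono_aux F (deriv F) a b hab (fun t ht => hd1 t ?_)
      (fun t ht => hF'nn t (le_trans ha ht.1))
    exact mem_Ioi.2 (by linarith [ht.1])
  -- iteration setup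
  set ℓ : ℝ := t₁ + M with hℓdef
  have hℓ0 : 0 < ℓ := by rw [hℓdef]; linarith
  set tstar : ℝ := t₁ + ℓ with htsdef
  set κ : ℝ := K * (2 * ℓ) ^ (-q) with hκdef
  clear_value ℓ tstar κ
  have h2ℓ0 : (0:ℝ) < 2 * ℓ := by linarith
  have hκ0 : 0 < κ := by
    have : (0:ℝ) < (2*ℓ) ^ (-q) := Real.rpow_pos_of_pos h2ℓ0 _
    rw [hκdef]; positivity
  obtain ⟨u, hudef⟩ : ∃ u : ℕ → ℝ, u = fun k => tstar - ℓ / 2 ^ k := ⟨_, rfl⟩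
  have hu0 : u 0 = t₁ := by rw [hudef]; simp only [pow_zero, div_one, htsdef]; ring
  have h2k1 : ∀ k : ℕ, (1:ℝ) ≤ 2 ^ k := fun k => one_le_pow₀ (by norm_num : (1:ℝ) ≤ 2)
  have hut₁ : ∀ k, t₁ ≤ u k := by
    intro k
    have h1 := h2k1 k
    have h2 : ℓ / 2 ^ k ≤ ℓ := by
      rw [div_le_iff₀ (by positivity : (0:ℝ) < 2 ^ k)]
      exact le_mul_of_one_le_right hℓ0.le h1
    rw [hudef, htsdef]; simp only []; linarith
  have huts : ∀ k, u k ≤ tstar := by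
    intro k
    have : 0 < ℓ / 2^k := by positivity
    rw [hudef]; simp only []; linarith
  have hustep : ∀ k, u (k+1) - u k = ℓ / 2 ^ (k+1) := by
    intro k
    have h2 : (2:ℝ)^k ≠ 0 := by positivity
    rw [hudef]
    simp only []
    field_simp
    ring
  have humono : ∀ k, u k ≤ u (k+1) := by
    intro k
    have h1 := hustep k
    have h2 : 0 < ℓ / 2^(k+1) := by positivity
    linarith
  obtain ⟨G, hG0, hGsucc⟩ : ∃ G : ℕ → ℝ, G 0 = C * ℓ ∧
      ∀ k, G (k+1) = G k + κ * G k ^ p * (ℓ / 2 ^ (k+1)) ^ 2 / 2 :=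
    ⟨fun k => Nat.rec (C * ℓ) (fun k Gk => Gk + κ * Gk ^ p * (ℓ / 2 ^ (k+1)) ^ 2 / 2) k,
      rfl, fun k => rfl⟩
  have ht2ℓ : ∀ t, t ≤ tstar → t + M ≤ 2 * ℓ := by
    intro t ht
    rw [htsdef] at ht
    rw [hℓdef] at ht ⊢
    linarith
  -- main induction
  have hind : ∀ k, 0 < G k ∧ ∀ t, u k ≤ t → t ≤ tstar → G k ≤ F t := by
    intro k
    induction k with
    | zero =>
      refine ⟨by rw [hG0]; positivity, ?_⟩
      intro t ht1 ht2
      rw [hu0] at ht1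
      have hT₀t : T₀ ≤ t := le_trans ht₁T₀ ht1
      have h1 := hFl t hT₀t
      have h2 : C * ℓ ≤ C * (t + M) := by
        apply mul_le_mul_of_nonneg_left _ hC.le
        rw [hℓdef]; linarith
      rw [hG0]; linarith
    | succ k ih =>
      obtain ⟨hGk0, hGkF⟩ := ih
      set mm : ℝ := κ * G k ^ p with hmmdef
      have hGkp : 0 < G k ^ p := Real.rpow_pos_of_pos hGk0 _
      have hmm0 : 0 < mm := by rw [hmmdef]; positivity
      have hdd2 : ∀ t ∈ Icc (u k) (u (k+1)), mm ≤ deriv (deriv F) t := by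
        intro t ht
        have ht1 : t₁ ≤ t := le_trans (hut₁ k) ht.1
        have hT₀t : T₀ ≤ t := le_trans ht₁T₀ ht1
        have htts : t ≤ tstar := le_trans ht.2 (huts (k+1))
        have htM : 0 < t + M := by linarith
        have hFt : G k ≤ F t := hGkF t ht.1 htts
        have h1 : G k ^ p ≤ F t ^ p := Real.rpow_le_rpow hGk0.le hFt (by linarith)
        have h2 : (2 * ℓ) ^ (-q) ≤ (t + M) ^ (-q) := by
          rw [Real.rpow_neg h2ℓ0.le, Real.rpow_neg htM.le]
          apply inv_anti₀ (Real.rpow_pos_of_pos htM _)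
          exact Real.rpow_le_rpow htM.le (ht2ℓ t htts) hq0.le
        have htMq : (0:ℝ) < (t + M) ^ (-q) := Real.rpow_pos_of_pos htM _
        calc mm = K * (2*ℓ)^(-q) * G k ^ p := by rw [hmmdef, hκdef]
          _ ≤ K * (t+M)^(-q) * G k ^ p := by
              apply mul_le_mul_of_nonneg_right _ hGkp.le
              exact mul_le_mul_of_nonneg_left h2 hK.le
          _ ≤ K * (t+M)^(-q) * F t ^ p :=
              mul_le_mul_of_nonneg_left h1 (by positivity)
          _ ≤ deriv (deriv F) t := hFd t hT₀t
      have hd1b : ∀ t ∈ Icc (u k) (u (k+1)), mm * (t - u k) ≤ deriv F t := by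
        intro t ht
        have h1 := key1 (deriv F) (deriv (deriv F)) (u k) t mm ht.1
          (fun s hs => hd2 s (by
            have : t₁ ≤ s := le_trans (hut₁ k) hs.1
            exact mem_Ioi.2 (by linarith)))
          (fun s hs => hdd2 s ⟨hs.1, le_trans hs.2 ht.2⟩)
        have h0 := hF'nn (u k) (hut₁ k)
        linarith
      have hstep := key2 F (deriv F) (u k) (u (k+1)) mm (humono k)
        (fun s hs => hd1 s (by
          have : t₁ ≤ s := le_trans (hut₁ k) hs.1
          exact mem_Ioi.2 (by linarith)))
        hd1b
      rw [hustep k] at hstep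
      have hFuk : G k ≤ F (u k) := hGkF (u k) le_rfl (huts k)
      have hFu1 : G (k+1) ≤ F (u (k+1)) := by
        rw [hGsucc k, ← hmmdef]
        linarith
      constructor
      · rw [hGsucc k]
        have h1 : 0 ≤ κ * G k ^ p * (ℓ / 2 ^ (k+1)) ^ 2 / 2 := by positivity
        linarith
      · intro t ht1 ht2
        have := hFmono (u (k+1)) t (hut₁ (k+1)) ht1
        linarith
  have hGF : ∀ k, G k ≤ F tstar := fun k => (hind k).2 tstar (huts k) le_rfl
  -- growth of G
  have hrho8 : ρ ^ (p-1) = 8 := by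
    rw [hρdef, ← Real.rpow_mul (by norm_num : (0:ℝ) ≤ 8),
      one_div_mul_cancel (ne_of_gt hp1), Real.rpow_one]
  have hCl : (0:ℝ) < C * ℓ := by positivity
  -- scalar inequality
  have h2q0 : (0:ℝ) < (2:ℝ) ^ q := Real.rpow_pos_of_pos (by norm_num) _
  have h2nq0 : (0:ℝ) < (2:ℝ) ^ (-q) := Real.rpow_pos_of_pos (by norm_num) _
  have h2qq : (2:ℝ)^(-q) * 2^q = 1 := by
    rw [← Real.rpow_add (by norm_num : (0:ℝ) < 2)]
    norm_num
  have e1 : κ * ℓ^2 * (C*ℓ)^(p-1) = K * (2:ℝ)^(-q) * C^(p-1) := by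
    rw [hκdef, Real.mul_rpow (by norm_num : (0:ℝ) ≤ 2) hℓ0.le,
      Real.mul_rpow hC.le hℓ0.le]
    have hl2 : (ℓ:ℝ)^(2:ℕ) = ℓ ^ ((2:ℕ):ℝ) := (Real.rpow_natCast ℓ 2).symm
    rw [hl2]
    rw [show K * ((2:ℝ)^(-q) * ℓ^(-q)) * ℓ ^ ((2:ℕ):ℝ) * (C^(p-1) * ℓ^(p-1))
        = K * (2:ℝ)^(-q) * C^(p-1) * (ℓ^(-q) * ℓ^((2:ℕ):ℝ) * ℓ^(p-1)) by ring]
    rw [← Real.rpow_add hℓ0, ← Real.rpow_add hℓ0]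
    rw [show -q + ((2:ℕ):ℝ) + (p-1) = 0 by push_cast; linarith, Real.rpow_zero, mul_one]
  have hB : ρ ≤ κ * ℓ^2 * (C*ℓ)^(p-1) / 8 := by
    rw [e1]
    have hK8 : (0:ℝ) < K / (8 * 2^q) := by positivity
    have h := mul_le_mul_of_nonneg_left hCpow hK8.le
    have e2 : K / (8 * 2^q) * Y = ρ := by
      rw [hYdef]
      field_simp
    have e3 : K / (8 * 2^q) * C^(p-1) = K * (2:ℝ)^(-q) * C^(p-1) / 8 := by
      rw [Real.rpow_neg (by norm_num : (0:ℝ) ≤ 2), div_eq_mul_inv K (8 * 2^q), mul_inv]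
      ring
    rw [e2, e3] at h
    exact h
  have hgrow : ∀ k, C * ℓ * ρ ^ k ≤ G k := by
    intro k
    induction k with
    | zero => simp [hG0]
    | succ k ih =>
      have hGk0 := (hind k).1
      have h1 : (C * ℓ * ρ ^ k) ^ (p-1) = (C*ℓ)^(p-1) * 8 ^ k := by
        rw [Real.mul_rpow hCl.le (by positivity), ← Real.rpow_natCast ρ k,
          ← Real.rpow_mul hρ0.le, mul_comm (k:ℝ) (p-1), Real.rpow_mul hρ0.le, hrho8,
          Real.rpow_natCast]
      have h2 : (C*ℓ)^(p-1) * 8 ^ k ≤ G k ^ (p-1) := by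
        rw [← h1]
        exact Real.rpow_le_rpow (by positivity) ih hp1.le
      have h3 : G k ^ (p-1) * G k = G k ^ p := by
        rw [← Real.rpow_add_one (ne_of_gt hGk0) (p-1)]
        norm_num
      have hpow4 : ((2:ℝ)^(k+1))^2 = 4^(k+1) := by
        rw [← pow_mul, mul_comm (k+1) 2, pow_mul]
        norm_num
      have h4succ : (4:ℝ)^(k+1) = 4 * 4^k := by rw [pow_succ]; ring
      have e2 : κ * G k ^ p * (ℓ / 2^(k+1))^2 / 2 = (κ * ℓ^2 / (8 * 4^k)) * (G k^(p-1) * G k) := by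
        rw [h3, div_pow, hpow4, h4succ]
        simp only [div_eq_mul_inv, mul_inv]
        ring
      have h7 : (1:ℝ) ≤ (8:ℝ)^k/4^k := by
        rw [← div_pow]
        norm_num
        exact one_le_pow₀ (by norm_num : (1:ℝ) ≤ 2)
      have hkey : ρ * G k ≤ κ * G k ^ p * (ℓ / 2^(k+1))^2 / 2 := by
        rw [e2]
        have h5 : (C*ℓ)^(p-1) * 8^k * G k ≤ G k^(p-1) * G k :=
          mul_le_mul_of_nonneg_right h2 hGk0.le
        have h6 : ρ * G k ≤ (κ * ℓ^2/(8*4^k)) * ((C*ℓ)^(p-1)*8^k*G k) := by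
          have e3 : (κ * ℓ^2/(8*4^k)) * ((C*ℓ)^(p-1)*8^k*G k)
              = (κ * ℓ^2 * (C*ℓ)^(p-1) / 8) * ((8:ℝ)^k/4^k) * G k := by
            simp only [div_eq_mul_inv, mul_inv]
            ring
          rw [e3]
          have hB0 : 0 < κ * ℓ^2 * (C*ℓ)^(p-1) / 8 := lt_of_lt_of_le hρ0 hB
          have h8 : ρ ≤ (κ * ℓ^2 * (C*ℓ)^(p-1) / 8) * ((8:ℝ)^k/4^k) := by
            have h8a := mul_nonneg hB0.le (sub_nonneg.2 h7)
            have h8b : (κ * ℓ^2 * (C*ℓ)^(p-1) / 8) * ((8:ℝ)^k/4^k - 1)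
                = (κ * ℓ^2 * (C*ℓ)^(p-1) / 8) * ((8:ℝ)^k/4^k) - κ * ℓ^2 * (C*ℓ)^(p-1) / 8 := by
              ring
            rw [h8b] at h8a
            linarith [hB]
          exact mul_le_mul_of_nonneg_right h8 hGk0.le
        calc ρ * G k ≤ _ := h6
          _ ≤ (κ * ℓ^2/(8*4^k)) * (G k^(p-1) * G k) := by
              apply mul_le_mul_of_nonneg_left h5
              positivity
      rw [hGsucc k]
      have : C * ℓ * ρ ^ (k+1) = (C * ℓ * ρ ^ k) * ρ := by ring
      rw [this]
      have h9 : (C * ℓ * ρ ^ k) * ρ ≤ G k * ρ := mul_le_mul_of_nonneg_right ih hρ0.le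
      linarith [h9, hkey, hGk0.le, mul_comm (G k) ρ]
  -- conclusion
  obtain ⟨k, hk⟩ := pow_unbounded_of_one_lt (F tstar / (C * ℓ)) hρ1
  rw [div_lt_iff₀ hCl] at hk
  have h1 := le_trans (hgrow k) (hGF k)
  have h2 : ρ^k * (C*ℓ) = C * ℓ * ρ^k := by ring
  linarith [h1, hk, h2]
end
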